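/- Let d ≥ 2, let T be a centrally symmetric triangulation of a convex polygon with 2d+2 vertices, and let p be any vertex with clockwise successor q = p+1. Then the set of edges T∖p, obtained by removing the edges {p,q} and {p̄,q̄} from T and replacing p by q and p̄ by q̄ in every other edge of T, is a centrally symmetric triangulation of a convex polygon with 2d vertices. -/
import Mathlib
set_option maxHeartbeats 1600000


namespace Cyclo

/-! Centrally symmetric triangulations of a convex polygon with `n` vertices,
labelled clockwise by `ZMod n`. -/

/-- The vertex opposite to `x` of the polygon with `n` vertices. -/
def opp (n : ℕ) (x : ZMod n) : ZMod n := x + ((n / 2 : ℕ) : ZMod n)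

/-- `e` is an edge on the polygon: a set of two distinct vertices. -/
def IsEdge (n : ℕ) (e : Finset (ZMod n)) : Prop :=
  ∃ x y : ZMod n, x ≠ y ∧ e = {x, y}

/-- `e` is a boundary edge of the polygon. -/
def IsBoundaryEdge (n : ℕ) (e : Finset (ZMod n)) : Prop :=
  ∃ x : ZMod n, e = {x, x + 1}

/-- `y` lies strictly between `x` and `z` in the clockwise cyclic order. -/
def Sbtw (n : ℕ) (x y z : ZMod n) : Prop :=
  0 < (y - x).val ∧ (y - x).val < (z - x).val

/-- Two edges cross: exactly one endpoint of one lies strictly between the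
endpoints of the other in the clockwise cyclic order. -/
def Crosses (n : ℕ) (e f : Finset (ZMod n)) : Prop :=
  ∃ a b c d : ZMod n, e = {a, b} ∧ f = {c, d} ∧ Sbtw n a c b ∧ Sbtw n b d a

/-- A triangulation: a maximal set of pairwise non-crossing edges. -/
def IsTriangulation (n : ℕ) (T : Set (Finset (ZMod n))) : Prop :=
  (∀ e ∈ T, IsEdge n e) ∧
  (∀ e ∈ T, ∀ f ∈ T, ¬ Crosses n e f) ∧
  (∀ e, IsEdge n e → (∀ f ∈ T, ¬ Crosses n e f ∧ ¬ Crosses n f e) → e ∈ T)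

/-- `T` is centrally symmetric. -/
def IsCS (n : ℕ) (T : Set (Finset (ZMod n))) : Prop :=
  ∀ x y : ZMod n, ({x, y} : Finset (ZMod n)) ∈ T →
    ({opp n x, opp n y} : Finset (ZMod n)) ∈ T

/-- `T` is a centrally symmetric triangulation. -/
def IsCST (n : ℕ) (T : Set (Finset (ZMod n))) : Prop :=
  IsTriangulation n T ∧ IsCS n T

/-- `T'` is obtained from `T` by flipping the interior edge `{x,x'}` (and its
centrally symmetric copy `{x̄,x̄'}`): the four boundary edges of the quadrilateral
with diagonal `{x,x'}` belong to `T`, and `{x,x'}`, `{x̄,x̄'}` are replaced by the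
opposite diagonals `{y,y'}`, `{ȳ,ȳ'}`. -/
def IsFlip (n : ℕ) (T T' : Set (Finset (ZMod n))) : Prop :=
  IsCST n T ∧ IsCST n T' ∧
  ∃ x x' y y' : ZMod n,
    ¬ IsBoundaryEdge n {x, x'} ∧
    ({x, x'} : Finset (ZMod n)) ∈ T ∧ ({x, y} : Finset (ZMod n)) ∈ T ∧
    ({y, x'} : Finset (ZMod n)) ∈ T ∧ ({x', y'} : Finset (ZMod n)) ∈ T ∧
    ({y', x} : Finset (ZMod n)) ∈ T ∧
    T' = (T \ {({x, x'} : Finset (ZMod n)), {opp n x, opp n x'}}) ∪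
         {({y, y'} : Finset (ZMod n)), {opp n y, opp n y'}}

/-- The flip graph (on all sets of edges; non-triangulations are isolated vertices). -/
def flipGraph (n : ℕ) : SimpleGraph (Set (Finset (ZMod n))) :=
  SimpleGraph.fromRel (IsFlip n)

/-- The flip distance of two centrally symmetric triangulations. -/
noncomputable def delta (n : ℕ) (T T' : Set (Finset (ZMod n))) : ℕ := (flipGraph n).dist T T'

/-- The flip graph on the centrally symmetric triangulations of the `n`-gon;
it is isomorphic to the graph of the `(n/2 - 1)`-dimensional cyclohedron. -/
def flipGraphCS (n : ℕ) : SimpleGraph {T : Set (Finset (ZMod n)) // IsCST n T} :=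
  SimpleGraph.fromRel fun T T' => IsFlip n T.1 T'.1

/-- `g 0, …, g k` is a geodesic from `Tm` to `Tp`. -/
def IsGeodesic (n : ℕ) (Tm Tp : Set (Finset (ZMod n)))
    (g : ℕ → Set (Finset (ZMod n))) (k : ℕ) : Prop :=
  g 0 = Tm ∧ g k = Tp ∧ (∀ i < k, (flipGraph n).Adj (g i) (g (i + 1))) ∧
    k = delta n Tm Tp

/-- The flip transforming `T` into `T'` is incident to the boundary edge `{p,q}`:
it removes `{p,r}` or `{q,r}`, where `r` is the apex of the triangle of `T` on `{p,q}`. -/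
def FlipIncident (n : ℕ) (T T' : Set (Finset (ZMod n))) (p q : ZMod n) : Prop :=
  ∃ r : ZMod n, ({p, r} : Finset (ZMod n)) ∈ T ∧ ({q, r} : Finset (ZMod n)) ∈ T ∧
    (({p, r} : Finset (ZMod n)) ∉ T' ∨ ({q, r} : Finset (ZMod n)) ∉ T')

/-- The number of flips along the path `g 0, …, g k` incident to `{p,q}`. -/
noncomputable def incidentCount (n : ℕ) (g : ℕ → Set (Finset (ZMod n))) (k : ℕ) (p q : ZMod n) : ℕ :=
  Nat.card {i : Fin k // FlipIncident n (g i.1) (g (i.1 + 1)) p q}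

/-- `x`, `y`, `z` are the vertices of a triangle of `T`. -/
def IsTriangleOf (n : ℕ) (T : Set (Finset (ZMod n))) (x y z : ZMod n) : Prop :=
  ({x, y} : Finset (ZMod n)) ∈ T ∧ ({y, z} : Finset (ZMod n)) ∈ T ∧
    ({x, z} : Finset (ZMod n)) ∈ T

/-- The three edges of the triangle with vertices `x`, `y`, `z`. -/
def triEdges (n : ℕ) (x y z : ZMod n) : Set (Finset (ZMod n)) :=
  {{x, y}, {y, z}, {x, z}}

/-- Relabelling map for the deletion of vertex `p` from the polygon with `2e+2`
vertices: `p` is replaced by `q = p+1`, `p̄` by `q̄`, and the remaining `2e`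
vertices are relabelled clockwise by `ZMod (2e)` (with `q ↦ 0`), so that
opposite vertices again differ by `e`. -/
def delV (e : ℕ) (p x : ZMod (2 * e + 2)) : ZMod (2 * e) :=
  ((if (x - p).val ≤ e + 1 then (x - p).val - 1 else (x - p).val - 2 : ℕ) : ZMod (2 * e))

/-- Deletion of vertex `p` from `T`: remove the edges `{p,p+1}` and `{p̄,p̄+1}`,
replace `p` by `p+1` and `p̄` by `p̄+1` in every other edge, and relabel. -/
def delT (e : ℕ) (p : ZMod (2 * e + 2)) (T : Set (Finset (ZMod (2 * e + 2)))) :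
    Set (Finset (ZMod (2 * e))) :=
  (fun s => s.image (delV e p)) ''
    (T \ {({p, p + 1} : Finset (ZMod (2 * e + 2))),
          {opp (2 * e + 2) p, opp (2 * e + 2) p + 1}})

/-- `DelButOne h k Tm Tp p₀ Sm Sp` holds when the pair `(Sm, Sp)` is obtained from
the pair `(Tm, Tp)` by successively deleting `k` of the `k+1` consecutive vertices
`p₀, p₀+1, …, p₀+k` (all but one of them), the deletions being performed in the
successively smaller polygons with the surviving vertices keeping their cyclic order. -/
def DelButOne : (h k : ℕ) → Set (Finset (ZMod (2 * (h + k) + 2))) →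
    Set (Finset (ZMod (2 * (h + k) + 2))) → ZMod (2 * (h + k) + 2) →
    Set (Finset (ZMod (2 * h + 2))) → Set (Finset (ZMod (2 * h + 2))) → Prop
  | _, 0, Tm, Tp, _, Sm, Sp => Sm = Tm ∧ Sp = Tp
  | h, k + 1, Tm, Tp, p₀, Sm, Sp =>
      ∃ j : ℕ, j ≤ k + 1 ∧
        DelButOne h k (delT (h + k + 1) (p₀ + (j : ZMod (2 * (h + (k + 1)) + 2))) Tm)
          (delT (h + k + 1) (p₀ + (j : ZMod (2 * (h + (k + 1)) + 2))) Tp)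
          (delV (h + k + 1) (p₀ + (j : ZMod (2 * (h + (k + 1)) + 2))) p₀) Sm Sp

/-- The set of boundary edges of the polygon with `n` vertices. -/
def boundarySet (n : ℕ) : Set (Finset (ZMod n)) := {e | IsBoundaryEdge n e}

/-- Closure of a set of edges under the central symmetry. -/
def symCl (n : ℕ) (S : Set (Finset (ZMod n))) : Set (Finset (ZMod n)) :=
  S ∪ (fun e => e.image (opp n)) '' S


/-- The interior edges (up to central symmetry) of the triangulation `A⁻`. -/
def AminusInterior (b c d : ℕ) : Set (Finset (ZMod (2 * d + 2))) :=
  {({(0 : ZMod (2 * d + 2)), opp (2 * d + 2) 0} : Finset (ZMod (2 * d + 2)))} ∪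
  {e | ∃ x : ℕ, c ≤ x ∧ x ≤ d ∧
    e = ({(0 : ZMod (2 * d + 2)), (x : ZMod (2 * d + 2))} : Finset (ZMod (2 * d + 2)))} ∪
  {e | ∃ x : ℕ, b ≤ x ∧ x ≤ c ∧
    e = ({(1 : ZMod (2 * d + 2)), (x : ZMod (2 * d + 2))} : Finset (ZMod (2 * d + 2)))} ∪
  {e | ∃ i : ℕ, 2 ≤ i ∧ i ≤ (b - 1) / 2 ∧
    e = ({(i : ZMod (2 * d + 2)), ((b + 1 - i : ℕ) : ZMod (2 * d + 2))} : Finset (ZMod (2 * d + 2)))} ∪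
  {e | ∃ i : ℕ, 2 ≤ i ∧ i ≤ b / 2 ∧
    e = ({(i : ZMod (2 * d + 2)), ((b + 2 - i : ℕ) : ZMod (2 * d + 2))} : Finset (ZMod (2 * d + 2)))}

/-- The triangulation `A⁻` of the `(2d+2)`-gon: its edges are the boundary edges,
the interior edges listed in `AminusInterior`, and their centrally symmetric copies. -/
def AminusSet (b c d : ℕ) : Set (Finset (ZMod (2 * d + 2))) :=
  boundarySet (2 * d + 2) ∪ symCl (2 * d + 2) (AminusInterior b c d)

/-- The edges that any triangulation `A⁺` of an `(a,b,c,d)`-pair must contain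
(`l = a + b - d + 2`): the edges `{1,d̄}` and `{l,c̄}`, the centrally symmetric
zigzag crossing `{0,0̄}`, and the centrally symmetric copies of all of these. -/
def AplusCore (a b c d : ℕ) : Set (Finset (ZMod (2 * d + 2))) :=
  symCl (2 * d + 2)
    ({({(1 : ZMod (2 * d + 2)), opp (2 * d + 2) (d : ZMod (2 * d + 2))} : Finset (ZMod (2 * d + 2)))} ∪
     {({((a + b - d + 2 : ℕ) : ZMod (2 * d + 2)),
        opp (2 * d + 2) (c : ZMod (2 * d + 2))} : Finset (ZMod (2 * d + 2)))} ∪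
     {e | ∃ i : ℕ, a + b - d + 2 ≤ i ∧ i ≤ c ∧
       e = ({(i : ZMod (2 * d + 2)),
             opp (2 * d + 2) ((c + (a + b - d + 2) - i : ℕ) : ZMod (2 * d + 2))} : Finset (ZMod (2 * d + 2)))} ∪
     {e | ∃ i : ℕ, a + b - d + 2 ≤ i ∧ i ≤ c - 1 ∧
       e = ({(i : ZMod (2 * d + 2)),
             opp (2 * d + 2) ((c + (a + b - d + 2) - 1 - i : ℕ) : ZMod (2 * d + 2))} : Finset (ZMod (2 * d + 2)))})

/-- `T` is an admissible triangulation `A⁺` for an `(a,b,c,d)`-pair: a centrally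
symmetric triangulation containing `AplusCore`, all of whose remaining interior
edges join a vertex of `{1,…,l}` to a vertex of `{c̄,…,d̄}` or a vertex of
`{1̄,…,l̄}` to a vertex of `{c,…,d}`, and in which every vertex of `{c̄,…,d̄}` is
joined to at least two vertices of `{1,…,l}` (so combs with at least two teeth
are attached at the vertices `c̄,…,d̄` and their opposites). -/
def IsAplus (a b c d : ℕ) (T : Set (Finset (ZMod (2 * d + 2)))) : Prop :=
  IsCST (2 * d + 2) T ∧ AplusCore a b c d ⊆ T ∧
  (∀ e ∈ T, ¬ IsBoundaryEdge (2 * d + 2) e → e ∉ AplusCore a b c d →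
    ∃ i j : ℕ, 1 ≤ i ∧ i ≤ a + b - d + 2 ∧ c ≤ j ∧ j ≤ d ∧
      (e = ({(i : ZMod (2 * d + 2)), opp (2 * d + 2) (j : ZMod (2 * d + 2))} : Finset (ZMod (2 * d + 2))) ∨
       e = ({opp (2 * d + 2) (i : ZMod (2 * d + 2)), (j : ZMod (2 * d + 2))} : Finset (ZMod (2 * d + 2))))) ∧
  (∀ j : ℕ, c ≤ j → j ≤ d →
    ∃ i₁ i₂ : ℕ, 1 ≤ i₁ ∧ i₁ ≤ a + b - d + 2 ∧ 1 ≤ i₂ ∧ i₂ ≤ a + b - d + 2 ∧ i₁ ≠ i₂ ∧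
      ({(i₁ : ZMod (2 * d + 2)), opp (2 * d + 2) (j : ZMod (2 * d + 2))} : Finset (ZMod (2 * d + 2))) ∈ T ∧
      ({(i₂ : ZMod (2 * d + 2)), opp (2 * d + 2) (j : ZMod (2 * d + 2))} : Finset (ZMod (2 * d + 2))) ∈ T)

/-- `(Am, Ap)` is an `(a,b,c,d)`-pair. -/
def IsABCDPair (a b c d : ℕ) (Am Ap : Set (Finset (ZMod (2 * d + 2)))) : Prop :=
  b < c ∧ c ≤ d ∧ d ≤ a + b ∧ 2 * a + b + 2 < 2 * d ∧
  Am = AminusSet b c d ∧ IsAplus a b c d Ap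

/-- The triangulation `U⁻`: interior edges `{0,0̄}`, `{0,x}` for `2 ≤ x ≤ d`,
and `{0̄,x̄}` for `2 ≤ x ≤ d`. -/
def UminusSet (d : ℕ) : Set (Finset (ZMod (2 * d + 2))) :=
  boundarySet (2 * d + 2) ∪ symCl (2 * d + 2)
    ({({(0 : ZMod (2 * d + 2)), opp (2 * d + 2) 0} : Finset (ZMod (2 * d + 2)))} ∪
     {e | ∃ x : ℕ, 2 ≤ x ∧ x ≤ d ∧
       e = ({(0 : ZMod (2 * d + 2)), (x : ZMod (2 * d + 2))} : Finset (ZMod (2 * d + 2)))})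

/-- The triangulation `U⁺`: interior edges the diagonal `{x,x̄}`, the edges `{0,v}`
for `v ∈ {2,…,x} ∪ {x̄,…,2d}`, and their centrally symmetric copies. -/
def UplusSet (d x : ℕ) : Set (Finset (ZMod (2 * d + 2))) :=
  boundarySet (2 * d + 2) ∪ symCl (2 * d + 2)
    ({({(x : ZMod (2 * d + 2)), opp (2 * d + 2) (x : ZMod (2 * d + 2))} : Finset (ZMod (2 * d + 2)))} ∪
     {e | ∃ v : ℕ, ((2 ≤ v ∧ v ≤ x) ∨ (x + d + 1 ≤ v ∧ v ≤ 2 * d)) ∧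
       e = ({(0 : ZMod (2 * d + 2)), (v : ZMod (2 * d + 2))} : Finset (ZMod (2 * d + 2)))})


section Infra

/-- cyclic distance in ℕ, omega-friendly. -/
def cyd (N a b : ℕ) : ℕ := if a ≤ b then b - a else b + N - a

def Fd (d s : ℕ) : ℕ := if s ≤ d + 1 then s - 1 else s - 2

lemma val_sub_eq_cyd {N : ℕ} [NeZero N] (x y : ZMod N) :
    (y - x).val = cyd N x.val y.val := by
  have hx := ZMod.val_lt x
  have hy := ZMod.val_lt y
  rcases le_or_gt x.val y.val with h | h
  · have : y - x = ((y.val - x.val : ℕ) : ZMod N) := by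
      have h2 : ((y.val - x.val : ℕ) : ZMod N) = (y.val : ZMod N) - (x.val : ZMod N) := by
        push_cast [Nat.cast_sub h]; ring
      rw [h2, ZMod.natCast_val, ZMod.natCast_val, ZMod.cast_id, ZMod.cast_id]
    rw [this, ZMod.val_cast_of_lt (by omega), cyd, if_pos h]
  · have : y - x = ((y.val + N - x.val : ℕ) : ZMod N) := by
      have h2 : ((y.val + N - x.val : ℕ) : ZMod N)
          = (y.val : ZMod N) + (N : ZMod N) - (x.val : ZMod N) := by
        push_cast [Nat.cast_sub (by omega : x.val ≤ y.val + N)]; ring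
      rw [h2, ZMod.natCast_self, ZMod.natCast_val, ZMod.natCast_val, ZMod.cast_id,
        ZMod.cast_id]
      ring
    rw [this, ZMod.val_cast_of_lt (by omega), cyd, if_neg (by omega)]

lemma pair_eq_pair {α : Type*} [DecidableEq α] {a b c d : α} (hab : a ≠ b)
    (h : ({a, b} : Finset α) = {c, d}) : (a = c ∧ b = d) ∨ (a = d ∧ b = c) := by
  have ha : a ∈ ({c, d} : Finset α) := h ▸ (by simp)
  have hb : b ∈ ({c, d} : Finset α) := h ▸ (by simp)
  have hc : c ∈ ({a, b} : Finset α) := h ▸ (by simp)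
  have hd' : d ∈ ({a, b} : Finset α) := h ▸ (by simp)
  simp only [Finset.mem_insert, Finset.mem_singleton] at ha hb hc hd'
  rcases ha with rfl | rfl
  · left; refine ⟨rfl, ?_⟩
    rcases hb with rfl | rfl
    · rcases hd' with h | h <;> tauto
    · rfl
  · right; refine ⟨rfl, ?_⟩
    rcases hb with rfl | rfl
    · rfl
    · rcases hc with h | h <;> tauto

variable {d : ℕ}

/-- positions relative to `p`. -/
def Sv (d : ℕ) (p x : ZMod (2 * d + 2)) : ℕ := (x - p).val

lemma nz1 (d : ℕ) : NeZero (2 * d + 2) := ⟨by omega⟩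
lemma nz2 (hd : 1 ≤ d) : NeZero (2 * d) := ⟨by omega⟩

lemma Sv_lt (p x : ZMod (2 * d + 2)) : Sv d p x < 2 * d + 2 := by
  haveI := nz1 d; exact ZMod.val_lt _

lemma Sv_inj {p x y : ZMod (2 * d + 2)} (h : Sv d p x = Sv d p y) : x = y := by
  haveI := nz1 d
  have : ((Sv d p x : ℕ) : ZMod (2 * d + 2)) = ((Sv d p y : ℕ) : ZMod (2 * d + 2)) := by
    rw [h]
  rw [Sv, Sv, ZMod.natCast_val, ZMod.natCast_val, ZMod.cast_id, ZMod.cast_id] at this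
  exact sub_left_injective this

lemma Sv_add_cast (p : ZMod (2 * d + 2)) (k : ℕ) (hk : k < 2 * d + 2) :
    Sv d p (p + (k : ℕ)) = k := by
  haveI := nz1 d
  rw [Sv, add_sub_cancel_left, ZMod.val_cast_of_lt hk]

lemma sbtw_iff (p x y z : ZMod (2 * d + 2)) :
    Sbtw (2 * d + 2) x y z ↔
      0 < cyd (2 * d + 2) (Sv d p x) (Sv d p y) ∧
      cyd (2 * d + 2) (Sv d p x) (Sv d p y) < cyd (2 * d + 2) (Sv d p x) (Sv d p z) := by
  haveI := nz1 d
  have h1 : y - x = (y - p) - (x - p) := by ring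
  have h2 : z - x = (z - p) - (x - p) := by ring
  rw [Sbtw, h1, h2, val_sub_eq_cyd (x - p) (y - p), val_sub_eq_cyd (x - p) (z - p)]
  rfl


lemma Fd_lt (hd : 1 ≤ d) {s : ℕ} (hs : s < 2 * d + 2) : Fd d s < 2 * d := by
  unfold Fd; split_ifs <;> omega

lemma delV_val (hd : 1 ≤ d) (p x : ZMod (2 * d + 2)) :
    (delV d p x).val = Fd d (Sv d p x) := by
  haveI := nz2 hd
  show ((if (x - p).val ≤ d + 1 then (x - p).val - 1 else (x - p).val - 2 : ℕ) :
      ZMod (2 * d)).val = _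
  rw [ZMod.val_cast_of_lt]
  · rfl
  · exact Fd_lt hd (Sv_lt p x)

lemma sbtw_down_iff (hd : 1 ≤ d) (p : ZMod (2 * d + 2)) (x y z : ZMod (2 * d)) :
    Sbtw (2 * d) x y z ↔
      0 < cyd (2 * d) x.val y.val ∧ cyd (2 * d) x.val y.val < cyd (2 * d) x.val z.val := by
  haveI := nz2 hd
  rw [Sbtw, val_sub_eq_cyd x y, val_sub_eq_cyd x z]

lemma val_lt' (hd : 1 ≤ d) (x : ZMod (2 * d)) : x.val < 2 * d := by
  haveI := nz2 hd; exact ZMod.val_lt x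

lemma delV_inj_or (hd : 1 ≤ d) {p x y : ZMod (2 * d + 2)}
    (h : delV d p x = delV d p y) :
    x = y ∨ (Sv d p x = 0 ∧ Sv d p y = 1) ∨ (Sv d p x = 1 ∧ Sv d p y = 0) ∨
      (Sv d p x = d + 1 ∧ Sv d p y = d + 2) ∨ (Sv d p x = d + 2 ∧ Sv d p y = d + 1) := by
  have hv : Fd d (Sv d p x) = Fd d (Sv d p y) := by
    rw [← delV_val hd, ← delV_val hd, h]
  have hx := Sv_lt p x
  have hy := Sv_lt p y
  by_cases hxy : Sv d p x = Sv d p y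
  · exact Or.inl (Sv_inj hxy)
  · right; unfold Fd at hv; split_ifs at hv <;> omega

/-- opposite upstairs. -/
lemma opp_eq (x : ZMod (2 * d + 2)) : opp (2 * d + 2) x = x + ((d + 1 : ℕ) : ZMod (2 * d + 2)) := by
  have h : (2 * d + 2) / 2 = d + 1 := by omega
  simp only [opp, h]

lemma Sv_opp (p x : ZMod (2 * d + 2)) :
    Sv d p (opp (2 * d + 2) x) =
      if Sv d p x ≤ d then Sv d p x + (d + 1) else Sv d p x - (d + 1) := by
  haveI := nz1 d
  have hx := Sv_lt p x
  have h1 : opp (2 * d + 2) x - p = (x - p) + ((d + 1 : ℕ) : ZMod (2 * d + 2)) := by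
    rw [opp_eq]; ring
  rcases le_or_gt (Sv d p x) d with h | h
  · have hrepr : ((Sv d p x : ℕ) : ZMod (2 * d + 2)) = x - p := by
      rw [Sv, ZMod.natCast_val, ZMod.cast_id]
    have h2 : (x - p) + ((d + 1 : ℕ) : ZMod (2 * d + 2)) =
        ((Sv d p x + (d + 1) : ℕ) : ZMod (2 * d + 2)) := by
      rw [show ((Sv d p x + (d + 1) : ℕ) : ZMod (2 * d + 2))
          = ((Sv d p x : ℕ) : ZMod (2 * d + 2)) + ((d + 1 : ℕ) : ZMod (2 * d + 2))
          from Nat.cast_add _ _, hrepr]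
    rw [Sv, h1, h2, ZMod.val_cast_of_lt (by omega), if_pos h]
  · have h2 : (x - p) + ((d + 1 : ℕ) : ZMod (2 * d + 2)) =
        ((Sv d p x - (d + 1) : ℕ) : ZMod (2 * d + 2)) := by
      have : ((Sv d p x - (d + 1) : ℕ) : ZMod (2 * d + 2))
          = ((Sv d p x + (d + 1) : ℕ) : ZMod (2 * d + 2))
            - ((2 * d + 2 : ℕ) : ZMod (2 * d + 2)) := by
        rw [← Nat.cast_sub (by omega)]
        congr 1
        omega
      have hrepr : ((Sv d p x : ℕ) : ZMod (2 * d + 2)) = x - p := by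
        rw [Sv, ZMod.natCast_val, ZMod.cast_id]
      rw [this, ZMod.natCast_self, sub_zero,
        show ((Sv d p x + (d + 1) : ℕ) : ZMod (2 * d + 2))
          = ((Sv d p x : ℕ) : ZMod (2 * d + 2)) + ((d + 1 : ℕ) : ZMod (2 * d + 2))
          from Nat.cast_add _ _, hrepr]
    rw [Sv, h1, h2, ZMod.val_cast_of_lt (by omega), if_neg (by omega)]

/-- opposite downstairs. -/
lemma opp_down_val (hd : 1 ≤ d) (y : ZMod (2 * d)) :
    (opp (2 * d) y).val = if y.val < d then y.val + d else y.val - d := by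
  haveI := nz2 hd
  have hy := ZMod.val_lt y
  have h0 : (2 * d) / 2 = d := by omega
  rcases lt_or_ge y.val d with h | h
  · have h2 : opp (2 * d) y = ((y.val + d : ℕ) : ZMod (2 * d)) := by
      have hrepr : ((y.val : ℕ) : ZMod (2 * d)) = y := by
        rw [ZMod.natCast_val, ZMod.cast_id]
      simp only [opp, h0]
      rw [show ((y.val + d : ℕ) : ZMod (2 * d))
          = ((y.val : ℕ) : ZMod (2 * d)) + ((d : ℕ) : ZMod (2 * d)) from Nat.cast_add _ _,
        hrepr]
    rw [h2, ZMod.val_cast_of_lt (by omega), if_pos h]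
  · have h2 : opp (2 * d) y = ((y.val - d : ℕ) : ZMod (2 * d)) := by
      have : ((y.val - d : ℕ) : ZMod (2 * d))
          = ((y.val + d : ℕ) : ZMod (2 * d)) - ((2 * d : ℕ) : ZMod (2 * d)) := by
        rw [← Nat.cast_sub (by omega)]
        congr 1
        omega
      have hrepr : ((y.val : ℕ) : ZMod (2 * d)) = y := by
        rw [ZMod.natCast_val, ZMod.cast_id]
      rw [this, ZMod.natCast_self, sub_zero,
        show ((y.val + d : ℕ) : ZMod (2 * d))
          = ((y.val : ℕ) : ZMod (2 * d)) + ((d : ℕ) : ZMod (2 * d)) from Nat.cast_add _ _,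
        hrepr]
      simp only [opp, h0]
    rw [h2, ZMod.val_cast_of_lt (by omega), if_neg (by omega)]

lemma val_inj_down (hd : 1 ≤ d) {x y : ZMod (2 * d)} (h : x.val = y.val) : x = y := by
  haveI := nz2 hd
  have : ((x.val : ℕ) : ZMod (2 * d)) = ((y.val : ℕ) : ZMod (2 * d)) := by rw [h]
  rwa [ZMod.natCast_val, ZMod.natCast_val, ZMod.cast_id, ZMod.cast_id] at this

lemma delV_opp (hd : 1 ≤ d) (p x : ZMod (2 * d + 2)) :
    delV d p (opp (2 * d + 2) x) = opp (2 * d) (delV d p x) := by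
  apply val_inj_down hd
  rw [delV_val hd, opp_down_val hd, delV_val hd, Sv_opp]
  have := Sv_lt p x
  unfold Fd
  split_ifs <;> omega


lemma val_add_one {N : ℕ} [NeZero N] (hN : 1 < N) (x : ZMod N) :
    (x + 1).val = if x.val + 1 = N then 0 else x.val + 1 := by
  have hx := ZMod.val_lt x
  have h1 : x + 1 = ((x.val + 1 : ℕ) : ZMod N) := by
    rw [Nat.cast_add, ZMod.natCast_val, ZMod.cast_id, Nat.cast_one]
  rw [h1, ZMod.val_natCast]
  split_ifs with h
  · rw [h, Nat.mod_self]
  · exact Nat.mod_eq_of_lt (by omega)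

lemma Sv_add_one (p x : ZMod (2 * d + 2)) :
    Sv d p (x + 1) = if Sv d p x + 1 = 2 * d + 2 then 0 else Sv d p x + 1 := by
  haveI := nz1 d
  have h1 : x + 1 - p = (x - p) + 1 := by ring
  rw [Sv, h1, val_add_one (by omega)]
  rfl

lemma Sv_p (p : ZMod (2 * d + 2)) : Sv d p p = 0 := by
  haveI := nz1 d
  rw [Sv, sub_self, ZMod.val_zero]

lemma Sv_q (p : ZMod (2 * d + 2)) : Sv d p (p + 1) = 1 := by
  rw [Sv_add_one, Sv_p]
  simp

lemma Sv_pb (p : ZMod (2 * d + 2)) : Sv d p (opp (2 * d + 2) p) = d + 1 := by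
  rw [Sv_opp, Sv_p]
  simp

lemma Sv_qb (hd : 1 ≤ d) (p : ZMod (2 * d + 2)) : Sv d p (opp (2 * d + 2) p + 1) = d + 2 := by
  rw [Sv_add_one, Sv_pb, if_neg (by omega)]

lemma opp_opp (x : ZMod (2 * d + 2)) : opp (2 * d + 2) (opp (2 * d + 2) x) = x := by
  rw [opp_eq, opp_eq, add_assoc, ← Nat.cast_add,
    show d + 1 + (d + 1) = 2 * d + 2 by ring, ZMod.natCast_self, add_zero]

lemma opp_opp_down (hd : 1 ≤ d) (x : ZMod (2 * d)) : opp (2 * d) (opp (2 * d) x) = x := by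
  have h : (2 * d) / 2 = d := by omega
  simp only [opp, h]
  rw [add_assoc, ← Nat.cast_add, show d + d = 2 * d by ring, ZMod.natCast_self, add_zero]

lemma image_pair {α β : Type*} [DecidableEq α] [DecidableEq β] (f : α → β) (x y : α) :
    ({x, y} : Finset α).image f = {f x, f y} := by
  rw [Finset.image_insert, Finset.image_singleton]

lemma Sv_vtx (p : ZMod (2 * d + 2)) {k : ℕ} (hk : k < 2 * d + 2) :
    Sv d p (p + (k : ℕ)) = k := Sv_add_cast p k hk

/-- boundary edges never cross anything. -/
lemma bnd_nat {N α β ξ : ℕ} (hN : 1 < N) (hα : α < N) (hβ : β < N) (hξ : ξ < N)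
    (h1 : 0 < cyd N α ξ) (h2 : cyd N α ξ < cyd N α β)
    (h3 : 0 < cyd N β (if ξ + 1 = N then 0 else ξ + 1))
    (h4 : cyd N β (if ξ + 1 = N then 0 else ξ + 1) < cyd N β α) : False := by
  unfold cyd at *
  split_ifs at * <;> omega

lemma bnd_not_cross {N : ℕ} [NeZero N] (hN : 1 < N) (x : ZMod N)
    (f : Finset (ZMod N)) :
    ¬ Crosses N {x, x + 1} f ∧ ¬ Crosses N f {x, x + 1} := by
  have hxadd : (x + 1).val = if x.val + 1 = N then 0 else x.val + 1 := val_add_one hN x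
  have hxne : x ≠ x + 1 := by
    intro h
    have h2 := congrArg ZMod.val h
    rw [hxadd] at h2
    have := ZMod.val_lt x
    split_ifs at h2 <;> omega
  constructor
  · rintro ⟨a, b, c, dd, hE, hF, hs1, hs2⟩
    rcases pair_eq_pair hxne hE with ⟨ha, hb⟩ | ⟨ha, hb⟩
    · rw [Sbtw, ← ha, ← hb] at hs1
      have : (x + 1 - x).val = 1 := by
        rw [add_sub_cancel_left, ZMod.val_one_eq_one_mod, Nat.mod_eq_of_lt hN]
      omega
    · rw [Sbtw, ← ha, ← hb] at hs2
      have : (x + 1 - x).val = 1 := by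
        rw [add_sub_cancel_left, ZMod.val_one_eq_one_mod, Nat.mod_eq_of_lt hN]
      omega
  · rintro ⟨a, b, c, dd, hE, hF, hs1, hs2⟩
    have hxlt := ZMod.val_lt x
    have halt := ZMod.val_lt a
    have hblt := ZMod.val_lt b
    rcases pair_eq_pair hxne hF with ⟨hc, hdd⟩ | ⟨hc, hdd⟩
    · rw [Sbtw, val_sub_eq_cyd a c, val_sub_eq_cyd a b, ← hc] at hs1
      rw [Sbtw, val_sub_eq_cyd b dd, val_sub_eq_cyd b a, ← hdd, hxadd] at hs2
      exact bnd_nat hN halt hblt hxlt hs1.1 hs1.2 hs2.1 hs2.2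
    · rw [Sbtw, val_sub_eq_cyd a c, val_sub_eq_cyd a b, ← hdd, hxadd] at hs1
      rw [Sbtw, val_sub_eq_cyd b dd, val_sub_eq_cyd b a, ← hc] at hs2
      exact bnd_nat hN hblt halt hxlt hs2.1 hs2.2 hs1.1 hs1.2

/-- pull a strict betweenness upstairs. -/
lemma pull_nat (hd : 1 ≤ d) {s t u : ℕ} (hs : s < 2 * d + 2) (ht : t < 2 * d + 2)
    (hu : u < 2 * d + 2)
    (h1 : 0 < cyd (2 * d) (Fd d s) (Fd d t))
    (h2 : cyd (2 * d) (Fd d s) (Fd d t) < cyd (2 * d) (Fd d s) (Fd d u)) :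
    0 < cyd (2 * d + 2) s t ∧ cyd (2 * d + 2) s t < cyd (2 * d + 2) s u := by
  simp only [cyd, Fd] at h1 h2 ⊢
  split_ifs at h1 h2 ⊢ <;> omega

/-- push a strict betweenness downstairs, given no collisions. -/
lemma push_nat (hd : 1 ≤ d) {s t u : ℕ} (hs : s < 2 * d + 2) (ht : t < 2 * d + 2)
    (hu : u < 2 * d + 2)
    (h1 : 0 < cyd (2 * d + 2) s t) (h2 : cyd (2 * d + 2) s t < cyd (2 * d + 2) s u)
    (d1 : Fd d s ≠ Fd d t) (d2 : Fd d s ≠ Fd d u) (d3 : Fd d t ≠ Fd d u) :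
    0 < cyd (2 * d) (Fd d s) (Fd d t) ∧
      cyd (2 * d) (Fd d s) (Fd d t) < cyd (2 * d) (Fd d s) (Fd d u) := by
  simp only [cyd, Fd] at h1 h2 d1 d2 d3 ⊢
  split_ifs at h1 h2 d1 d2 d3 ⊢ <;> omega

lemma sbtw_pull (hd : 1 ≤ d) (p : ZMod (2 * d + 2)) {x y z : ZMod (2 * d + 2)}
    (h : Sbtw (2 * d) (delV d p x) (delV d p y) (delV d p z)) :
    Sbtw (2 * d + 2) x y z := by
  rw [sbtw_down_iff hd p, delV_val hd, delV_val hd, delV_val hd] at h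
  rw [sbtw_iff p]
  exact pull_nat hd (Sv_lt p x) (Sv_lt p y) (Sv_lt p z) h.1 h.2

lemma sbtw_push (hd : 1 ≤ d) (p : ZMod (2 * d + 2)) {x y z : ZMod (2 * d + 2)}
    (h : Sbtw (2 * d + 2) x y z)
    (d1 : Fd d (Sv d p x) ≠ Fd d (Sv d p y)) (d2 : Fd d (Sv d p x) ≠ Fd d (Sv d p z))
    (d3 : Fd d (Sv d p y) ≠ Fd d (Sv d p z)) :
    Sbtw (2 * d) (delV d p x) (delV d p y) (delV d p z) := by
  rw [sbtw_iff p] at h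
  rw [sbtw_down_iff hd p, delV_val hd, delV_val hd, delV_val hd]
  exact push_nat hd (Sv_lt p x) (Sv_lt p y) (Sv_lt p z) h.1 h.2 d1 d2 d3


lemma succ_of_Sv (p : ZMod (2 * d + 2)) {x y : ZMod (2 * d + 2)}
    (h : Sv d p y = Sv d p x + 1) (hlt : Sv d p x + 1 < 2 * d + 2) : y = x + 1 := by
  apply Sv_inj (x := y) (y := x + 1)
  rw [Sv_add_one, if_neg (by omega : ¬ (Sv d p x + 1 = 2 * d + 2))]
  exact h

lemma cyd_pos_ne {N a b : ℕ} (h : 0 < cyd N a b) : a ≠ b := by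
  intro he; subst he; simp [cyd] at h

lemma Fd_eq_cases (hd : 1 ≤ d) {s t : ℕ} (hs : s < 2 * d + 2) (ht : t < 2 * d + 2)
    (h : Fd d s = Fd d t) :
    s = t ∨ (s = 0 ∧ t = 1) ∨ (s = 1 ∧ t = 0) ∨ (s = d + 1 ∧ t = d + 2) ∨
      (s = d + 2 ∧ t = d + 1) := by
  simp only [Fd] at h; split_ifs at h <;> omega

lemma imposs1 {N a c b : ℕ} (ha : a < N) (hc : c < N) (hb : b < N) (hsucc : a = c + 1)
    (h1 : 0 < cyd N a c) (h2 : cyd N a c < cyd N a b) : False := by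
  simp only [cyd] at h1 h2; split_ifs at h1 h2 <;> omega

lemma imposs2 {N a c b : ℕ} (ha : a < N) (hc : c < N) (hb : b < N) (hsucc : c = b + 1)
    (h1 : 0 < cyd N a c) (h2 : cyd N a c < cyd N a b) : False := by
  simp only [cyd] at h1 h2; split_ifs at h1 h2 <;> omega

lemma PXnat (hd : 2 ≤ d) {sa sb sc sd' : ℕ}
    (ha : sa < 2 * d + 2) (hb : sb < 2 * d + 2) (hc : sc < 2 * d + 2) (hd' : sd' < 2 * d + 2)
    (hab : Fd d sa ≠ Fd d sb) (hcd : Fd d sc ≠ Fd d sd')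
    (h1 : 0 < cyd (2 * d + 2) sa sc) (h2 : cyd (2 * d + 2) sa sc < cyd (2 * d + 2) sa sb)
    (h3 : 0 < cyd (2 * d + 2) sb sd') (h4 : cyd (2 * d + 2) sb sd' < cyd (2 * d + 2) sb sa) :
    (Fd d sc ≠ Fd d sa ∧ Fd d sc ≠ Fd d sb ∧ Fd d sd' ≠ Fd d sa ∧ Fd d sd' ≠ Fd d sb)
    ∨ ((sc = 0 ∨ sc = d + 1) ∧ sb = sc + 1)
    ∨ ((sd' = 0 ∨ sd' = d + 1) ∧ sa = sd' + 1)
    ∨ ((sa = 0 ∨ sa = d + 1) ∧ sc = sa + 1)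
    ∨ ((sb = 0 ∨ sb = d + 1) ∧ sd' = sb + 1) := by
  have hd1 : 1 ≤ d := by omega
  by_cases hca : Fd d sc = Fd d sa
  · rcases Fd_eq_cases hd1 hc ha hca with heq | ⟨h1', h2'⟩ | ⟨h1', h2'⟩ | ⟨h1', h2'⟩ | ⟨h1', h2'⟩
    · exact absurd heq (Ne.symm (cyd_pos_ne h1))
    · exact (imposs1 ha hc hb (by omega) h1 h2).elim
    · right; right; right; left; exact ⟨Or.inl h2', by omega⟩
    · exact (imposs1 ha hc hb (by omega) h1 h2).elim
    · right; right; right; left; exact ⟨Or.inr h2', by omega⟩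
  · by_cases hcb : Fd d sc = Fd d sb
    · rcases Fd_eq_cases hd1 hc hb hcb with heq | ⟨h1', h2'⟩ | ⟨h1', h2'⟩ | ⟨h1', h2'⟩ | ⟨h1', h2'⟩
      · exact absurd h2 (by rw [heq]; exact lt_irrefl _)
      · right; left; exact ⟨Or.inl h1', by omega⟩
      · exact (imposs2 ha hc hb (by omega) h1 h2).elim
      · right; left; exact ⟨Or.inr h1', by omega⟩
      · exact (imposs2 ha hc hb (by omega) h1 h2).elim
    · by_cases hdb : Fd d sd' = Fd d sb
      · rcases Fd_eq_cases hd1 hd' hb hdb with heq | ⟨h1', h2'⟩ | ⟨h1', h2'⟩ | ⟨h1', h2'⟩ | ⟨h1', h2'⟩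
        · exact absurd heq (Ne.symm (cyd_pos_ne h3))
        · exact (imposs1 hb hd' ha (by omega) h3 h4).elim
        · right; right; right; right; exact ⟨Or.inl h2', by omega⟩
        · exact (imposs1 hb hd' ha (by omega) h3 h4).elim
        · right; right; right; right; exact ⟨Or.inr h2', by omega⟩
      · by_cases hda : Fd d sd' = Fd d sa
        · rcases Fd_eq_cases hd1 hd' ha hda with heq | ⟨h1', h2'⟩ | ⟨h1', h2'⟩ | ⟨h1', h2'⟩ | ⟨h1', h2'⟩
          · exact absurd h4 (by rw [heq]; exact lt_irrefl _)
          · right; right; left; exact ⟨Or.inl h1', by omega⟩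
          · exact (imposs2 hb hd' ha (by omega) h3 h4).elim
          · right; right; left; exact ⟨Or.inr h1', by omega⟩
          · exact (imposs2 hb hd' ha (by omega) h3 h4).elim
        · left; exact ⟨hca, hcb, hda, hdb⟩

lemma rotA {N A D k : ℕ} (hA : A < N) (hD : D < N) (hk : k + 1 < N)
    (h1 : 0 < cyd N A k) (h2 : cyd N A k < cyd N A (k + 1))
    (h3 : 0 < cyd N (k + 1) D) (h4 : cyd N (k + 1) D < cyd N (k + 1) A) :
    0 < cyd N D A ∧ cyd N D A < cyd N D k := by
  simp only [cyd] at h1 h2 h3 h4 ⊢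
  split_ifs at h1 h2 h3 h4 ⊢ <;> omega

lemma rotB {N B C k : ℕ} (hB : B < N) (hC : C < N) (hk : k + 1 < N)
    (h1 : 0 < cyd N (k + 1) C) (h2 : cyd N (k + 1) C < cyd N (k + 1) B)
    (h3 : 0 < cyd N B k) (h4 : cyd N B k < cyd N B (k + 1)) :
    0 < cyd N C B ∧ cyd N C B < cyd N C k := by
  simp only [cyd] at h1 h2 h3 h4 ⊢
  split_ifs at h1 h2 h3 h4 ⊢ <;> omega

lemma rotC {N B D k : ℕ} (hB : B < N) (hD : D < N) (hk : k + 1 < N)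
    (h2 : cyd N k (k + 1) < cyd N k B)
    (h3 : 0 < cyd N B D) (h4 : cyd N B D < cyd N B k)
    (hB1 : B ≠ k + 1) (hD1 : D ≠ k + 1) :
    0 < cyd N (k + 1) B ∧ cyd N (k + 1) B < cyd N (k + 1) D := by
  simp only [cyd] at h2 h3 h4 ⊢
  split_ifs at h2 h3 h4 ⊢ <;> omega

lemma rotD {N A C k : ℕ} (hA : A < N) (hC : C < N) (hk : k + 1 < N)
    (h1 : 0 < cyd N A C) (h2 : cyd N A C < cyd N A k)
    (h4 : cyd N k (k + 1) < cyd N k A)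
    (hA1 : A ≠ k + 1) (hC1 : C ≠ k + 1) :
    0 < cyd N (k + 1) A ∧ cyd N (k + 1) A < cyd N (k + 1) C := by
  simp only [cyd] at h1 h2 h4 ⊢
  split_ifs at h1 h2 h4 ⊢ <;> omega

lemma PX2 (hd : 2 ≤ d) (p : ZMod (2 * d + 2)) {X Y Z W : ZMod (2 * d + 2)}
    (hXY : delV d p X ≠ delV d p Y) (hZW : delV d p Z ≠ delV d p W)
    (hc : Crosses (2 * d + 2) {X, Y} {Z, W} ∨ Crosses (2 * d + 2) {Z, W} {X, Y}) :
    (Crosses (2 * d) {delV d p X, delV d p Y} {delV d p Z, delV d p W} ∨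
     Crosses (2 * d) {delV d p Z, delV d p W} {delV d p X, delV d p Y}) ∨
    (∃ v u u' : ZMod (2 * d + 2), (Sv d p v = 0 ∨ Sv d p v = d + 1) ∧
      ({Z, W} : Finset (ZMod (2 * d + 2))) = {v, u} ∧
      ({X, Y} : Finset (ZMod (2 * d + 2))) = {v + 1, u'} ∧
      Sbtw (2 * d + 2) (v + 1) u u') ∨
    (∃ v u u' : ZMod (2 * d + 2), (Sv d p v = 0 ∨ Sv d p v = d + 1) ∧
      ({X, Y} : Finset (ZMod (2 * d + 2))) = {v, u'} ∧
      ({Z, W} : Finset (ZMod (2 * d + 2))) = {v + 1, u} ∧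
      Sbtw (2 * d + 2) u' u v) := by
  have hd1 : 1 ≤ d := by omega
  have toFd : ∀ {x y : ZMod (2 * d + 2)}, delV d p x ≠ delV d p y →
      Fd d (Sv d p x) ≠ Fd d (Sv d p y) := by
    intro x y h hF
    exact h (val_inj_down hd1 (by rw [delV_val hd1, delV_val hd1, hF]))
  have hXYne : X ≠ Y := fun h => hXY (by rw [h])
  have hZWne : Z ≠ W := fun h => hZW (by rw [h])
  have himg : ∀ {x y a b : ZMod (2 * d + 2)}, x ≠ y → ({x, y} : Finset (ZMod (2 * d + 2))) = {a, b} →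
      ({delV d p x, delV d p y} : Finset (ZMod (2 * d))) = {delV d p a, delV d p b} := by
    intro x y a b hne h
    rcases pair_eq_pair hne h with ⟨h1, h2⟩ | ⟨h1, h2⟩
    · rw [h1, h2]
    · rw [h1, h2, Finset.pair_comm]
  rcases hc with ⟨a1, b1, c1, d1, hE, hF, hs1, hs2⟩ | ⟨a1, b1, c1, d1, hF, hE, hs1, hs2⟩
  · -- direction 1 : E = {a1,b1}, F = {c1,d1}
    have hab : delV d p a1 ≠ delV d p b1 := by
      rcases pair_eq_pair hXYne hE with ⟨h1, h2⟩ | ⟨h1, h2⟩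
      · rw [← h1, ← h2]; exact hXY
      · rw [← h1, ← h2]; exact hXY.symm
    have hcd : delV d p c1 ≠ delV d p d1 := by
      rcases pair_eq_pair hZWne hF with ⟨h1, h2⟩ | ⟨h1, h2⟩
      · rw [← h1, ← h2]; exact hZW
      · rw [← h1, ← h2]; exact hZW.symm
    have H1 := (sbtw_iff p a1 c1 b1).mp hs1
    have H2 := (sbtw_iff p b1 d1 a1).mp hs2
    rcases PXnat hd (Sv_lt p a1) (Sv_lt p b1) (Sv_lt p c1) (Sv_lt p d1)
      (toFd hab) (toFd hcd) H1.1 H1.2 H2.1 H2.2 with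
      hno | ⟨hk, hsucc⟩ | ⟨hk, hsucc⟩ | ⟨hk, hsucc⟩ | ⟨hk, hsucc⟩
    · left; left
      exact ⟨delV d p a1, delV d p b1, delV d p c1, delV d p d1,
        himg hXYne hE, himg hZWne hF,
        sbtw_push hd1 p hs1 hno.1.symm (toFd hab) hno.2.1,
        sbtw_push hd1 p hs2 hno.2.2.2.symm (toFd hab).symm hno.2.2.1⟩
    · have hb1 : b1 = c1 + 1 := succ_of_Sv p hsucc (by rcases hk with h | h <;> omega)
      right; left
      exact ⟨c1, d1, a1, hk, hF, by rw [hE, hb1, Finset.pair_comm],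
        by rw [← hb1]; exact hs2⟩
    · have ha1 : a1 = d1 + 1 := succ_of_Sv p hsucc (by rcases hk with h | h <;> omega)
      right; left
      exact ⟨d1, c1, b1, hk, by rw [hF, Finset.pair_comm], by rw [hE, ha1],
        by rw [← ha1]; exact hs1⟩
    · have hc1 : c1 = a1 + 1 := succ_of_Sv p hsucc (by rcases hk with h | h <;> omega)
      right; right
      exact ⟨a1, d1, b1, hk, hE, by rw [hF, hc1], hs2⟩
    · have hd1' : d1 = b1 + 1 := succ_of_Sv p hsucc (by rcases hk with h | h <;> omega)
      right; right
      exact ⟨b1, c1, a1, hk, by rw [hE, Finset.pair_comm],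
        by rw [hF, hd1', Finset.pair_comm], hs1⟩
  · -- direction 2 : F = {a1,b1}, E = {c1,d1}
    have hab : delV d p a1 ≠ delV d p b1 := by
      rcases pair_eq_pair hZWne hF with ⟨h1, h2⟩ | ⟨h1, h2⟩
      · rw [← h1, ← h2]; exact hZW
      · rw [← h1, ← h2]; exact hZW.symm
    have hcd : delV d p c1 ≠ delV d p d1 := by
      rcases pair_eq_pair hXYne hE with ⟨h1, h2⟩ | ⟨h1, h2⟩
      · rw [← h1, ← h2]; exact hXY
      · rw [← h1, ← h2]; exact hXY.symm
    have H1 := (sbtw_iff p a1 c1 b1).mp hs1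
    have H2 := (sbtw_iff p b1 d1 a1).mp hs2
    rcases PXnat hd (Sv_lt p a1) (Sv_lt p b1) (Sv_lt p c1) (Sv_lt p d1)
      (toFd hab) (toFd hcd) H1.1 H1.2 H2.1 H2.2 with
      hno | ⟨hk, hsucc⟩ | ⟨hk, hsucc⟩ | ⟨hk, hsucc⟩ | ⟨hk, hsucc⟩
    · left; right
      exact ⟨delV d p a1, delV d p b1, delV d p c1, delV d p d1,
        himg hZWne hF, himg hXYne hE,
        sbtw_push hd1 p hs1 hno.1.symm (toFd hab) hno.2.1,
        sbtw_push hd1 p hs2 hno.2.2.2.symm (toFd hab).symm hno.2.2.1⟩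
    · -- Sv c1 special, b1 = c1 + 1 ; c1 ∈ E
      have hb1 : b1 = c1 + 1 := succ_of_Sv p hsucc (by rcases hk with h | h <;> omega)
      have hklt : Sv d p c1 + 1 < 2 * d + 2 := by rcases hk with h | h <;> omega
      right; right
      refine ⟨c1, a1, d1, hk, hE, by rw [hF, hb1, Finset.pair_comm], ?_⟩
      rw [sbtw_iff p]
      rw [hsucc] at H1 H2
      exact rotA (Sv_lt p a1) (Sv_lt p d1) hklt H1.1 H1.2 H2.1 H2.2
    · -- Sv d1 special, a1 = d1 + 1 ; d1 ∈ E
      have ha1 : a1 = d1 + 1 := succ_of_Sv p hsucc (by rcases hk with h | h <;> omega)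
      have hklt : Sv d p d1 + 1 < 2 * d + 2 := by rcases hk with h | h <;> omega
      right; right
      refine ⟨d1, b1, c1, hk, by rw [hE, Finset.pair_comm], by rw [hF, ha1], ?_⟩
      rw [sbtw_iff p]
      rw [hsucc] at H1 H2
      exact rotB (Sv_lt p b1) (Sv_lt p c1) hklt H1.1 H1.2 H2.1 H2.2
    · -- Sv a1 special, c1 = a1 + 1 ; a1 ∈ F
      have hc1 : c1 = a1 + 1 := succ_of_Sv p hsucc (by rcases hk with h | h <;> omega)
      have hklt : Sv d p a1 + 1 < 2 * d + 2 := by rcases hk with h | h <;> omega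
      right; left
      refine ⟨a1, b1, d1, hk, hF, by rw [hE, hc1], ?_⟩
      have hB1 : Sv d p b1 ≠ Sv d p a1 + 1 := by
        intro h
        apply toFd hab
        rcases hk with h' | h' <;>
          · rw [h, h']
            simp only [Fd]
            split_ifs <;> omega
      have hD1 : Sv d p d1 ≠ Sv d p a1 + 1 := by
        intro h
        exact hcd (by rw [Sv_inj (h.trans hsucc.symm)])
      rw [← hc1]
      rw [sbtw_iff p, hsucc]
      rw [hsucc] at H1
      exact rotC (Sv_lt p b1) (Sv_lt p d1) hklt H1.2 H2.1 H2.2 hB1 hD1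
    · -- Sv b1 special, d1 = b1 + 1 ; b1 ∈ F
      have hd1' : d1 = b1 + 1 := succ_of_Sv p hsucc (by rcases hk with h | h <;> omega)
      have hklt : Sv d p b1 + 1 < 2 * d + 2 := by rcases hk with h | h <;> omega
      right; left
      refine ⟨b1, a1, c1, hk, by rw [hF, Finset.pair_comm],
        by rw [hE, hd1', Finset.pair_comm], ?_⟩
      have hA1 : Sv d p a1 ≠ Sv d p b1 + 1 := by
        intro h
        apply toFd hab
        rcases hk with h' | h' <;>
          · rw [h, h']
            simp only [Fd]
            split_ifs <;> omega
      have hC1 : Sv d p c1 ≠ Sv d p b1 + 1 := by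
        intro h
        exact hcd (by rw [Sv_inj (h.trans hsucc.symm)])
      rw [← hd1']
      rw [sbtw_iff p, hsucc]
      rw [hsucc] at H2
      exact rotD (Sv_lt p a1) (Sv_lt p c1) hklt H1.1 H1.2 H2.2 hA1 hC1

end Infra


section FinalNat

lemma natB {d t su su2 : ℕ} (hd : 2 ≤ d) (ht : t < 2 * d + 2) (hsu : su < 2 * d + 2)
    (hsu2 : su2 < 2 * d + 2) (h0 : su ≠ 0) (h1' : su2 ≠ 1)
    (h1 : 0 < cyd (2 * d + 2) 1 su) (h2 : cyd (2 * d + 2) 1 su < cyd (2 * d + 2) 1 t)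
    (h3 : 0 < cyd (2 * d + 2) t su2) (h4 : cyd (2 * d + 2) t su2 < cyd (2 * d + 2) t 0) :
    (0 < cyd (2 * d + 2) 0 1 ∧ cyd (2 * d + 2) 0 1 < cyd (2 * d + 2) 0 su) ∧
    (0 < cyd (2 * d + 2) su su2 ∧ cyd (2 * d + 2) su su2 < cyd (2 * d + 2) su 0) := by
  simp only [cyd] at h1 h2 h3 h4 ⊢
  split_ifs at h1 h2 h3 h4 ⊢ <;> omega

lemma natC1 {d sD sC : ℕ} (hd : 2 ≤ d) (hsD : sD < 2 * d + 2) (hsC : sC < 2 * d + 2)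
    (e1 : sD ≠ 0) (e2 : sD ≠ d + 1) (e3 : sC ≠ 0) (e4 : sC ≠ 1)
    (h1 : 0 < cyd (2 * d + 2) 1 sD) (h2 : cyd (2 * d + 2) 1 sD < cyd (2 * d + 2) 1 (d + 2))
    (h3 : 0 < cyd (2 * d + 2) (d + 2) sC) (h4 : cyd (2 * d + 2) (d + 2) sC < cyd (2 * d + 2) (d + 2) 0) :
    (0 < cyd (2 * d + 2) 0 1 ∧ cyd (2 * d + 2) 0 1 < cyd (2 * d + 2) 0 sD) ∧
    (0 < cyd (2 * d + 2) sD sC ∧ cyd (2 * d + 2) sD sC < cyd (2 * d + 2) sD 0) := by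
  simp only [cyd] at h1 h2 h3 h4 ⊢
  split_ifs at h1 h2 h3 h4 ⊢ <;> omega

lemma natC2 {d sD sW : ℕ} (hd : 2 ≤ d) (hsD : sD < 2 * d + 2) (hsW : sW < 2 * d + 2)
    (e1 : sD ≠ 0) (e2 : sD ≠ d + 1)
    (h1 : 0 < cyd (2 * d + 2) 1 sD) (h2 : cyd (2 * d + 2) 1 sD < cyd (2 * d + 2) 1 (d + 2))
    (h3 : 0 < cyd (2 * d + 2) (d + 1) sW) (h4 : cyd (2 * d + 2) (d + 1) sW < cyd (2 * d + 2) (d + 1) 0) :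
    (0 < cyd (2 * d + 2) 0 1 ∧ cyd (2 * d + 2) 0 1 < cyd (2 * d + 2) 0 sD) ∧
    (0 < cyd (2 * d + 2) sD sW ∧ cyd (2 * d + 2) sD sW < cyd (2 * d + 2) sD 0) := by
  simp only [cyd] at h1 h2 h3 h4 ⊢
  split_ifs at h1 h2 h3 h4 ⊢ <;> omega

lemma natC3 {d sC sW : ℕ} (hd : 2 ≤ d) (hsC : sC < 2 * d + 2) (hsW : sW < 2 * d + 2)
    (h1 : 0 < cyd (2 * d + 2) (d + 2) sC) (h2 : cyd (2 * d + 2) (d + 2) sC < cyd (2 * d + 2) (d + 2) 0)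
    (h3 : 0 < cyd (2 * d + 2) 0 sW) (h4 : cyd (2 * d + 2) 0 sW < cyd (2 * d + 2) 0 (d + 1)) :
    (0 < cyd (2 * d + 2) (d + 1) (d + 2) ∧
      cyd (2 * d + 2) (d + 1) (d + 2) < cyd (2 * d + 2) (d + 1) sC) ∧
    (0 < cyd (2 * d + 2) sC sW ∧ cyd (2 * d + 2) sC sW < cyd (2 * d + 2) sC (d + 1)) := by
  simp only [cyd] at h1 h2 h3 h4 ⊢
  split_ifs at h1 h2 h3 h4 ⊢ <;> omega

lemma natC4 {d sD sC : ℕ} (hd : 2 ≤ d) (hsD : sD < 2 * d + 2) (hsC : sC < 2 * d + 2)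
    (e1 : sD ≠ 0) (e2 : sD ≠ d + 1)
    (h1 : 0 < cyd (2 * d + 2) (d + 2) sD) (h2 : cyd (2 * d + 2) (d + 2) sD < cyd (2 * d + 2) (d + 2) 1)
    (h3 : 0 < cyd (2 * d + 2) 1 sC) (h4 : cyd (2 * d + 2) 1 sC < cyd (2 * d + 2) 1 (d + 1)) :
    (0 < cyd (2 * d + 2) (d + 1) (d + 2) ∧
      cyd (2 * d + 2) (d + 1) (d + 2) < cyd (2 * d + 2) (d + 1) sD) ∧
    (0 < cyd (2 * d + 2) sD sC ∧ cyd (2 * d + 2) sD sC < cyd (2 * d + 2) sD (d + 1)) := by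
  simp only [cyd] at h1 h2 h3 h4 ⊢
  split_ifs at h1 h2 h3 h4 ⊢ <;> omega

lemma natC5 {d sC sW : ℕ} (hd : 2 ≤ d) (hsC : sC < 2 * d + 2) (hsW : sW < 2 * d + 2)
    (h1 : 0 < cyd (2 * d + 2) 1 sC) (h2 : cyd (2 * d + 2) 1 sC < cyd (2 * d + 2) 1 (d + 1))
    (h3 : 0 < cyd (2 * d + 2) (d + 1) sW) (h4 : cyd (2 * d + 2) (d + 1) sW < cyd (2 * d + 2) (d + 1) 0) :
    (0 < cyd (2 * d + 2) 0 1 ∧ cyd (2 * d + 2) 0 1 < cyd (2 * d + 2) 0 sC) ∧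
    (0 < cyd (2 * d + 2) sC sW ∧ cyd (2 * d + 2) sC sW < cyd (2 * d + 2) sC 0) := by
  simp only [cyd] at h1 h2 h3 h4 ⊢
  split_ifs at h1 h2 h3 h4 ⊢ <;> omega

lemma natC6 {d sD sW : ℕ} (hd : 2 ≤ d) (hsD : sD < 2 * d + 2) (hsW : sW < 2 * d + 2)
    (e1 : sD ≠ 0) (e2 : sD ≠ d + 1)
    (h1 : 0 < cyd (2 * d + 2) (d + 2) sD) (h2 : cyd (2 * d + 2) (d + 2) sD < cyd (2 * d + 2) (d + 2) 1)
    (h3 : 0 < cyd (2 * d + 2) 0 sW) (h4 : cyd (2 * d + 2) 0 sW < cyd (2 * d + 2) 0 (d + 1)) :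
    (0 < cyd (2 * d + 2) (d + 1) (d + 2) ∧
      cyd (2 * d + 2) (d + 1) (d + 2) < cyd (2 * d + 2) (d + 1) sD) ∧
    (0 < cyd (2 * d + 2) sD sW ∧ cyd (2 * d + 2) sD sW < cyd (2 * d + 2) sD (d + 1)) := by
  simp only [cyd] at h1 h2 h3 h4 ⊢
  split_ifs at h1 h2 h3 h4 ⊢ <;> omega

end FinalNat

/-- Proposition on deletions: for `d ≥ 2`, deleting any vertex `p`
from a centrally symmetric triangulation of a convex polygon with `2d+2` vertices yields
a centrally symmetric triangulation of a convex polygon with `2d` vertices. -/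
theorem deletion_is_cs_triangulation (d : ℕ) (hd : 2 ≤ d)
    (T : Set (Finset (ZMod (2 * d + 2)))) (hT : IsCST (2 * d + 2) T)
    (p : ZMod (2 * d + 2)) :
    IsCST (2 * d) (delT d p T) := by
  haveI := nz1 d
  haveI := nz2 (show 1 ≤ d by omega)
  have hd1 : 1 ≤ d := by omega
  obtain ⟨⟨hTedge, hTncr, hTmax⟩, hTcs⟩ := hT
  have hSp : Sv d p p = 0 := Sv_p p
  have hSq : Sv d p (p + 1) = 1 := Sv_q p
  have hSpb : Sv d p (opp (2 * d + 2) p) = d + 1 := Sv_pb p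
  have hSqb : Sv d p (opp (2 * d + 2) p + 1) = d + 2 := Sv_qb hd1 p
  have hdelq : delV d p (p + 1) = delV d p p := by
    apply val_inj_down hd1
    rw [delV_val hd1, delV_val hd1, hSq, hSp]
    simp only [Fd]; split_ifs <;> omega
  have hdelqb : delV d p (opp (2 * d + 2) p + 1) = delV d p (opp (2 * d + 2) p) := by
    apply val_inj_down hd1
    rw [delV_val hd1, delV_val hd1, hSqb, hSpb]
    simp only [Fd]; split_ifs <;> omega
  have hnotrem : ∀ X Y : ZMod (2 * d + 2), delV d p X ≠ delV d p Y →
      ({X, Y} : Finset (ZMod (2 * d + 2))) ≠ {p, p + 1} ∧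
      ({X, Y} : Finset (ZMod (2 * d + 2))) ≠ {opp (2 * d + 2) p, opp (2 * d + 2) p + 1} := by
    intro X Y hne
    have hXY : X ≠ Y := fun h => hne (by rw [h])
    constructor
    · intro h
      rcases pair_eq_pair hXY h with ⟨h1, h2⟩ | ⟨h1, h2⟩
      · exact hne (by rw [h1, h2, hdelq])
      · exact hne (by rw [h1, h2, hdelq])
    · intro h
      rcases pair_eq_pair hXY h with ⟨h1, h2⟩ | ⟨h1, h2⟩
      · exact hne (by rw [h1, h2, hdelqb])
      · exact hne (by rw [h1, h2, hdelqb])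
  have hmem : ∀ E : Finset (ZMod (2 * d + 2)), E ∈ T → E ≠ {p, p + 1} →
      E ≠ {opp (2 * d + 2) p, opp (2 * d + 2) p + 1} →
      E.image (delV d p) ∈ delT d p T := by
    intro E hE h1 h2
    refine ⟨E, ⟨hE, ?_⟩, rfl⟩
    simp only [Set.mem_insert_iff, Set.mem_singleton_iff]
    push_neg
    exact ⟨h1, h2⟩
  have fnd : ∀ X Y : ZMod (2 * d + 2), ({X, Y} : Finset (ZMod (2 * d + 2))) ∈ T →
      delV d p X ≠ delV d p Y →
      ({delV d p X, delV d p Y} : Finset (ZMod (2 * d))) ∈ delT d p T := by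
    intro X Y hm hne
    have hnr := hnotrem X Y hne
    have h := hmem {X, Y} hm hnr.1 hnr.2
    rwa [image_pair] at h
  have hrep : ∀ E, E ∈ T → E ≠ {p, p + 1} →
      E ≠ {opp (2 * d + 2) p, opp (2 * d + 2) p + 1} →
      ∃ X Y : ZMod (2 * d + 2), X ≠ Y ∧ E = {X, Y} ∧ delV d p X ≠ delV d p Y := by
    intro E hE h1 h2
    obtain ⟨X, Y, hne, rfl⟩ := hTedge E hE
    refine ⟨X, Y, hne, rfl, ?_⟩
    intro heq
    rcases delV_inj_or hd1 heq with heq' | ⟨c1, c2⟩ | ⟨c1, c2⟩ | ⟨c1, c2⟩ | ⟨c1, c2⟩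
    · exact hne heq'
    · exact h1 (by rw [Sv_inj (c1.trans hSp.symm), Sv_inj (c2.trans hSq.symm)])
    · exact h1 (by rw [Sv_inj (c1.trans hSq.symm), Sv_inj (c2.trans hSp.symm)]; exact Finset.pair_comm _ _)
    · exact h2 (by rw [Sv_inj (c1.trans hSpb.symm), Sv_inj (c2.trans hSqb.symm)])
    · exact h2 (by rw [Sv_inj (c1.trans hSqb.symm), Sv_inj (c2.trans hSpb.symm)]; exact Finset.pair_comm _ _)
  have hbnd : ∀ (x : ZMod (2 * d + 2)) (g : Finset (ZMod (2 * d + 2))),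
      ¬Crosses (2 * d + 2) {x, x + 1} g ∧ ¬Crosses (2 * d + 2) g {x, x + 1} :=
    fun x g => bnd_not_cross (by omega) x g
  have hSvsucc : ∀ v : ZMod (2 * d + 2), (Sv d p v = 0 ∨ Sv d p v = d + 1) →
      Sv d p (v + 1) = Sv d p v + 1 := by
    intro v hv
    rw [Sv_add_one, if_neg (by rcases hv with h | h <;> omega)]
  have crossfind : ∀ X Y : ZMod (2 * d + 2), X ≠ Y →
      ({X, Y} : Finset (ZMod (2 * d + 2))) ∉ T →
      ∃ F, F ∈ T ∧ (Crosses (2 * d + 2) {X, Y} F ∨ Crosses (2 * d + 2) F {X, Y}) := by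
    intro X Y hne hnot
    by_contra hcon
    push_neg at hcon
    exact hnot (hTmax {X, Y} ⟨X, Y, hne, rfl⟩ hcon)
  have comp1 : ∀ e ∈ delT d p T, IsEdge (2 * d) e := by
    rintro e ⟨E, ⟨hE, hnm⟩, rfl⟩
    simp only [Set.mem_insert_iff, Set.mem_singleton_iff] at hnm
    push_neg at hnm
    obtain ⟨X, Y, hne, rfl, hdne⟩ := hrep E hE hnm.1 hnm.2
    exact ⟨delV d p X, delV d p Y, hdne, image_pair _ _ _⟩
  have comp2 : ∀ e ∈ delT d p T, ∀ f ∈ delT d p T, ¬Crosses (2 * d) e f := by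
    rintro e ⟨E, ⟨hE, hnmE⟩, rfl⟩ f ⟨F, ⟨hF, hnmF⟩, rfl⟩ hcr
    simp only [Set.mem_insert_iff, Set.mem_singleton_iff] at hnmE hnmF
    push_neg at hnmE hnmF
    obtain ⟨X, Y, hneXY, rfl, hdXY⟩ := hrep E hE hnmE.1 hnmE.2
    obtain ⟨Z, W, hneZW, rfl, hdZW⟩ := hrep F hF hnmF.1 hnmF.2
    obtain ⟨a1, b1, c1, d1, hE1, hF1, hs1, hs2⟩ := hcr
    simp only [image_pair] at hE1 hF1
    rcases pair_eq_pair hdXY hE1 with ⟨e1, e2⟩ | ⟨e1, e2⟩ <;>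
      rcases pair_eq_pair hdZW hF1 with ⟨f1, f2⟩ | ⟨f1, f2⟩
    · exact hTncr _ hE _ hF ⟨X, Y, Z, W, rfl, rfl,
        sbtw_pull hd1 p (by rw [e1, f1, e2]; exact hs1),
        sbtw_pull hd1 p (by rw [e2, f2, e1]; exact hs2)⟩
    · exact hTncr _ hE _ hF ⟨X, Y, W, Z, rfl, Finset.pair_comm Z W,
        sbtw_pull hd1 p (by rw [e1, f2, e2]; exact hs1),
        sbtw_pull hd1 p (by rw [e2, f1, e1]; exact hs2)⟩
    · exact hTncr _ hE _ hF ⟨Y, X, Z, W, Finset.pair_comm X Y, rfl,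
        sbtw_pull hd1 p (by rw [e2, f1, e1]; exact hs1),
        sbtw_pull hd1 p (by rw [e1, f2, e2]; exact hs2)⟩
    · exact hTncr _ hE _ hF ⟨Y, X, W, Z, Finset.pair_comm X Y, Finset.pair_comm Z W,
        sbtw_pull hd1 p (by rw [e2, f2, e1]; exact hs1),
        sbtw_pull hd1 p (by rw [e1, f1, e2]; exact hs2)⟩
  have comp3 : IsCS (2 * d) (delT d p T) := by
    intro x y hxy
    obtain ⟨E, ⟨hE, hnm⟩, himg⟩ := hxy
    simp only [Set.mem_insert_iff, Set.mem_singleton_iff] at hnm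
    push_neg at hnm
    obtain ⟨X, Y, hne, rfl, hdne⟩ := hrep E hE hnm.1 hnm.2
    simp only [image_pair] at himg
    have hmemO : ({opp (2 * d + 2) X, opp (2 * d + 2) Y} : Finset (ZMod (2 * d + 2))) ∈ T :=
      hTcs X Y hE
    have hoppinj : ∀ u v : ZMod (2 * d), opp (2 * d) u = opp (2 * d) v → u = v := by
      intro u v h
      rw [← opp_opp_down hd1 u, h, opp_opp_down hd1]
    have hdneO : delV d p (opp (2 * d + 2) X) ≠ delV d p (opp (2 * d + 2) Y) := by
      rw [delV_opp hd1, delV_opp hd1]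
      exact fun h => hdne (hoppinj _ _ h)
    have hres := fnd _ _ hmemO hdneO
    rw [delV_opp hd1, delV_opp hd1] at hres
    rcases pair_eq_pair hdne himg with ⟨h1, h2⟩ | ⟨h1, h2⟩
    · rwa [h1, h2] at hres
    · rw [h1, h2] at hres
      rwa [Finset.pair_comm] at hres
  refine ⟨⟨comp1, comp2, ?_⟩, comp3⟩
  -- maximality
  have neSv : ∀ {x y : ZMod (2 * d + 2)}, Sv d p x ≠ Sv d p y → x ≠ y :=
    fun h hxy => h (by rw [hxy])
  have mk : ∀ s : ℕ, s < 2 * d + 2 →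
      ∃ X : ZMod (2 * d + 2), Sv d p X = s ∧ (delV d p X).val = Fd d s := by
    intro s hs
    exact ⟨p + (s : ℕ), Sv_vtx p hs, by rw [delV_val hd1, Sv_vtx p hs]⟩
  have engine : ∀ X Y : ZMod (2 * d + 2), X ≠ Y → delV d p X ≠ delV d p Y →
      ({X, Y} : Finset (ZMod (2 * d + 2))) ∉ T →
      (∀ f ∈ delT d p T, ¬Crosses (2 * d) {delV d p X, delV d p Y} f ∧
        ¬Crosses (2 * d) f {delV d p X, delV d p Y}) →
      ∃ v u u' : ZMod (2 * d + 2), (Sv d p v = 0 ∨ Sv d p v = d + 1) ∧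
        ((({v, u} : Finset (ZMod (2 * d + 2))) ∈ T ∧
            ({X, Y} : Finset (ZMod (2 * d + 2))) = {v + 1, u'} ∧
            Sbtw (2 * d + 2) (v + 1) u u' ∧ delV d p v ≠ delV d p u) ∨
         (({X, Y} : Finset (ZMod (2 * d + 2))) = {v, u'} ∧
            ({v + 1, u} : Finset (ZMod (2 * d + 2))) ∈ T ∧
            Sbtw (2 * d + 2) u' u v ∧ delV d p (v + 1) ≠ delV d p u)) := by
    intro X Y hne hdne hnot hncXY
    obtain ⟨F, hFmem, hcross⟩ := crossfind X Y hne hnot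
    have hFr1 : F ≠ {p, p + 1} := by
      rintro rfl
      rcases hcross with h | h
      · exact (hbnd p {X, Y}).2 h
      · exact (hbnd p {X, Y}).1 h
    have hFr2 : F ≠ {opp (2 * d + 2) p, opp (2 * d + 2) p + 1} := by
      rintro rfl
      rcases hcross with h | h
      · exact (hbnd (opp (2 * d + 2) p) {X, Y}).2 h
      · exact (hbnd (opp (2 * d + 2) p) {X, Y}).1 h
    obtain ⟨Z, W, hneZW, rfl, hdZW⟩ := hrep F hFmem hFr1 hFr2
    rcases PX2 hd p hdne hdZW hcross with (hcr | hcr) | ⟨v, u, u', hkv, hFp, hEp, hsb⟩ |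
      ⟨v, u, u', hkv, hEp, hFp, hsb⟩
    · exact absurd hcr ((hncXY _ (fnd Z W hFmem hdZW)).1)
    · exact absurd hcr ((hncXY _ (fnd Z W hFmem hdZW)).2)
    · refine ⟨v, u, u', hkv, Or.inl ⟨by rw [← hFp]; exact hFmem, hEp, hsb, ?_⟩⟩
      rcases pair_eq_pair hneZW hFp with ⟨h1, h2⟩ | ⟨h1, h2⟩
      · rw [← h1, ← h2]; exact hdZW
      · rw [← h1, ← h2]; exact hdZW.symm
    · refine ⟨v, u, u', hkv, Or.inr ⟨hEp, by rw [← hFp]; exact hFmem, hsb, ?_⟩⟩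
      rcases pair_eq_pair hneZW hFp with ⟨h1, h2⟩ | ⟨h1, h2⟩
      · rw [← h1, ← h2]; exact hdZW
      · rw [← h1, ← h2]; exact hdZW.symm
  -- translation invariance downstairs
  have sbtwO : ∀ {x y z : ZMod (2 * d)}, Sbtw (2 * d) x y z →
      Sbtw (2 * d) (opp (2 * d) x) (opp (2 * d) y) (opp (2 * d) z) := by
    intro x y z h
    have h1 : opp (2 * d) y - opp (2 * d) x = y - x := by simp only [opp]; ring
    have h2 : opp (2 * d) z - opp (2 * d) x = z - x := by simp only [opp]; ring
    unfold Sbtw at h ⊢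
    rw [h1, h2]; exact h
  have crossesO : ∀ {e f : Finset (ZMod (2 * d))}, Crosses (2 * d) e f →
      Crosses (2 * d) (e.image (opp (2 * d))) (f.image (opp (2 * d))) := by
    rintro e f ⟨a1, b1, c1, d1, rfl, rfl, hs1, hs2⟩
    exact ⟨opp _ a1, opp _ b1, opp _ c1, opp _ d1, image_pair _ _ _, image_pair _ _ _,
      sbtwO hs1, sbtwO hs2⟩
  have mirror : ∀ a b : ZMod (2 * d),
      (∀ f ∈ delT d p T, ¬Crosses (2 * d) {a, b} f ∧ ¬Crosses (2 * d) f {a, b}) →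
      (∀ f ∈ delT d p T, ¬Crosses (2 * d) {opp (2 * d) a, opp (2 * d) b} f ∧
        ¬Crosses (2 * d) f {opp (2 * d) a, opp (2 * d) b}) := by
    intro a b hnc f hf
    obtain ⟨z, w, hzw, rfl⟩ := comp1 f hf
    have hf' : ({opp (2 * d) z, opp (2 * d) w} : Finset (ZMod (2 * d))) ∈ delT d p T :=
      comp3 z w hf
    constructor
    · intro hcr
      have h := crossesO hcr
      rw [image_pair, image_pair, opp_opp_down hd1, opp_opp_down hd1] at h
      exact (hnc _ hf').1 h
    · intro hcr
      have h := crossesO hcr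
      rw [image_pair, image_pair, opp_opp_down hd1, opp_opp_down hd1] at h
      exact (hnc _ hf').2 h
  -- case of one endpoint at 0
  have main0 : ∀ a b : ZMod (2 * d), a.val = 0 → b.val ≠ 0 → b.val ≠ d →
      (∀ f ∈ delT d p T, ¬Crosses (2 * d) {a, b} f ∧ ¬Crosses (2 * d) f {a, b}) →
      ({a, b} : Finset (ZMod (2 * d))) ∈ delT d p T := by
    intro a b ha0 hb0 hbd hnc
    have hbv := val_lt' hd1 b
    have habne : a ≠ b := fun h => hb0 (by rw [← h, ha0])
    obtain ⟨A, hSA, hAval⟩ := mk (if b.val ≤ d - 1 then b.val + 1 else b.val + 2)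
      (by split_ifs <;> omega)
    have hFdt : Fd d (if b.val ≤ d - 1 then b.val + 1 else b.val + 2) = b.val := by
      simp only [Fd]; split_ifs <;> omega
    obtain ⟨htA1, htA2, htA3, htA4⟩ :
        2 ≤ Sv d p A ∧ Sv d p A < 2 * d + 2 ∧ Sv d p A ≠ d + 1 ∧ Sv d p A ≠ d + 2 := by
      refine ⟨?_, ?_, ?_, ?_⟩ <;> rw [hSA] <;> split_ifs <;> omega
    have hdelA : delV d p A = b := val_inj_down hd1 (by rw [hAval, hFdt])
    have hdelp' : delV d p p = a :=
      val_inj_down hd1 (by rw [delV_val hd1, hSp, ha0]; simp only [Fd]; split_ifs <;> omega)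
    have hdelq' : delV d p (p + 1) = a := by rw [hdelq]; exact hdelp'
    have hAq : A ≠ p + 1 := neSv (by rw [hSq]; omega)
    have hAp : A ≠ p := neSv (by rw [hSp]; omega)
    have hnc1 : ∀ f ∈ delT d p T,
        ¬Crosses (2 * d) {delV d p A, delV d p (p + 1)} f ∧
        ¬Crosses (2 * d) f {delV d p A, delV d p (p + 1)} := by
      intro f hf
      rw [hdelA, hdelq', Finset.pair_comm b a]
      exact hnc f hf
    by_cases hE1 : ({A, p + 1} : Finset (ZMod (2 * d + 2))) ∈ T
    · have h := fnd A (p + 1) hE1 (by rw [hdelA, hdelq']; exact fun h => habne h.symm)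
      rwa [hdelA, hdelq', Finset.pair_comm b a] at h
    · obtain ⟨v, u, u', hkv, hsh⟩ := engine A (p + 1) hAq
        (by rw [hdelA, hdelq']; exact fun h => habne h.symm) hE1 hnc1
      rcases hsh with ⟨hFm, hEp, hsb, hdvu⟩ | ⟨hEp, hFm, hsb, hdvu⟩
      · rcases pair_eq_pair hAq hEp with ⟨h1, h2⟩ | ⟨h1, h2⟩
        · exfalso
          have h := congrArg (Sv d p) h1
          rw [hSvsucc v hkv] at h
          rcases hkv with hk | hk <;> rw [hk] at h <;> omega
        · -- p+1 = v+1 : v = p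
          have hv : Sv d p v = 0 := by
            have h := congrArg (Sv d p) h2
            rw [hSq, hSvsucc v hkv] at h
            omega
          have hvp : v = p := Sv_inj (hv.trans hSp.symm)
          rw [hvp] at hFm hsb
          rw [← h1] at hsb
          have hSu0 : Sv d p u ≠ 0 := by
            intro h
            rw [hvp] at hdvu
            exact hdvu (by rw [Sv_inj (h.trans hSp.symm)])
          have hcap := (sbtw_iff p (p + 1) u A).mp hsb
          rw [hSq] at hcap
          -- phase 2 : E2 = {A, p}
          have hnc2 : ∀ f ∈ delT d p T,
              ¬Crosses (2 * d) {delV d p A, delV d p p} f ∧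
              ¬Crosses (2 * d) f {delV d p A, delV d p p} := by
            intro f hf
            rw [hdelA, hdelp', Finset.pair_comm b a]
            exact hnc f hf
          by_cases hE2 : ({A, p} : Finset (ZMod (2 * d + 2))) ∈ T
          · have h := fnd A p hE2 (by rw [hdelA, hdelp']; exact fun h => habne h.symm)
            rwa [hdelA, hdelp', Finset.pair_comm b a] at h
          · obtain ⟨v2, u2, u2', hkv2, hsh2⟩ := engine A p hAp
              (by rw [hdelA, hdelp']; exact fun h => habne h.symm) hE2 hnc2
            exfalso
            rcases hsh2 with ⟨hGm, hEp2, hsb2, hdvu2⟩ | ⟨hEp2, hGm, hsb2, hdvu2⟩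
            · rcases pair_eq_pair hAp hEp2 with ⟨g1, g2⟩ | ⟨g1, g2⟩
              · have h := congrArg (Sv d p) g1
                rw [hSvsucc v2 hkv2] at h
                rcases hkv2 with hk | hk <;> rw [hk] at h <;> omega
              · have h := congrArg (Sv d p) g2
                rw [hSp, hSvsucc v2 hkv2] at h
                omega
            · rcases pair_eq_pair hAp hEp2 with ⟨g1, g2⟩ | ⟨g1, g2⟩
              · have h := congrArg (Sv d p) g1
                rcases hkv2 with hk | hk <;> rw [hk] at h <;> omega
              · -- p = v2
                rw [← g2] at hGm hsb2
                rw [← g1] at hsb2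
                have hSu21 : Sv d p u2 ≠ 1 := by
                  intro h
                  rw [← g2] at hdvu2
                  exact hdvu2 (by rw [Sv_inj (h.trans hSq.symm)])
                have hcap2 := (sbtw_iff p A u2 p).mp hsb2
                rw [hSp] at hcap2
                have hfin := natB hd (Sv_lt p A) (Sv_lt p u) (Sv_lt p u2) hSu0 hSu21
                  hcap.1 hcap.2 hcap2.1 hcap2.2
                exact hTncr _ hFm _ hGm
                  ⟨p, u, p + 1, u2, rfl, rfl,
                    by rw [sbtw_iff p, hSp, hSq]; exact hfin.1,
                    by rw [sbtw_iff p, hSp]; exact hfin.2⟩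
      · -- bad4 for E1 impossible
        exfalso
        rcases pair_eq_pair hAq hEp with ⟨h1, h2⟩ | ⟨h1, h2⟩
        · have h := congrArg (Sv d p) h1
          rcases hkv with hk | hk <;> rw [hk] at h <;> omega
        · have h := congrArg (Sv d p) h2
          rw [hSq] at h
          rcases hkv with hk | hk <;> rw [hk] at h <;> omega
  -- generic case
  have mainA : ∀ a b : ZMod (2 * d), a.val ≠ 0 → a.val ≠ d → b.val ≠ 0 → b.val ≠ d → a ≠ b →
      (∀ f ∈ delT d p T, ¬Crosses (2 * d) {a, b} f ∧ ¬Crosses (2 * d) f {a, b}) →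
      ({a, b} : Finset (ZMod (2 * d))) ∈ delT d p T := by
    intro a b ha0 had hb0 hbd hab hnc
    have hav := val_lt' hd1 a
    have hbv := val_lt' hd1 b
    obtain ⟨X, hSX, hXval⟩ := mk (if a.val ≤ d - 1 then a.val + 1 else a.val + 2)
      (by split_ifs <;> omega)
    obtain ⟨Y, hSY, hYval⟩ := mk (if b.val ≤ d - 1 then b.val + 1 else b.val + 2)
      (by split_ifs <;> omega)
    have hdelX : delV d p X = a :=
      val_inj_down hd1 (by rw [hXval]; simp only [Fd]; split_ifs <;> omega)
    have hdelY : delV d p Y = b :=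
      val_inj_down hd1 (by rw [hYval]; simp only [Fd]; split_ifs <;> omega)
    have hXY : X ≠ Y := fun h => hab (by rw [← hdelX, ← hdelY, h])
    have hdXY : delV d p X ≠ delV d p Y := by rw [hdelX, hdelY]; exact hab
    by_cases hET : ({X, Y} : Finset (ZMod (2 * d + 2))) ∈ T
    · have h := fnd X Y hET hdXY
      rwa [hdelX, hdelY] at h
    · obtain ⟨v, u, u', hkv, hsh⟩ := engine X Y hXY hdXY hET
        (by intro f hf; rw [hdelX, hdelY]; exact hnc f hf)
      exfalso
      obtain ⟨hsX1, hsX2, hsX3, hsX4⟩ :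
          Sv d p X ≠ 0 ∧ Sv d p X ≠ 1 ∧ Sv d p X ≠ d + 1 ∧ Sv d p X ≠ d + 2 := by
        refine ⟨?_, ?_, ?_, ?_⟩ <;> rw [hSX] <;> split_ifs <;> omega
      obtain ⟨hsY1, hsY2, hsY3, hsY4⟩ :
          Sv d p Y ≠ 0 ∧ Sv d p Y ≠ 1 ∧ Sv d p Y ≠ d + 1 ∧ Sv d p Y ≠ d + 2 := by
        refine ⟨?_, ?_, ?_, ?_⟩ <;> rw [hSY] <;> split_ifs <;> omega
      rcases hsh with ⟨hFm, hEp, hsb, hdvu⟩ | ⟨hEp, hFm, hsb, hdvu⟩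
      · rcases pair_eq_pair hXY hEp with ⟨h1, h2⟩ | ⟨h1, h2⟩
        · have h := congrArg (Sv d p) h1
          rw [hSvsucc v hkv] at h
          rcases hkv with hk | hk <;> rw [hk] at h <;> omega
        · have h := congrArg (Sv d p) h2
          rw [hSvsucc v hkv] at h
          rcases hkv with hk | hk <;> rw [hk] at h <;> omega
      · rcases pair_eq_pair hXY hEp with ⟨h1, h2⟩ | ⟨h1, h2⟩
        · have h := congrArg (Sv d p) h1
          rcases hkv with hk | hk <;> rw [hk] at h <;> omega
        · have h := congrArg (Sv d p) h2
          rcases hkv with hk | hk <;> rw [hk] at h <;> omega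
  have mainC : ∀ a b : ZMod (2 * d), a.val = 0 → b.val = d →
      (∀ f ∈ delT d p T, ¬Crosses (2 * d) {a, b} f ∧ ¬Crosses (2 * d) f {a, b}) →
      ({a, b} : Finset (ZMod (2 * d))) ∈ delT d p T := by
    intro a b ha0 hbd hnc
    have habne : a ≠ b := fun h => by rw [h, hbd] at ha0; omega
    have hdelp' : delV d p p = a :=
      val_inj_down hd1 (by rw [delV_val hd1, hSp, ha0]; simp only [Fd]; split_ifs <;> omega)
    have hdelq' : delV d p (p + 1) = a := by rw [hdelq]; exact hdelp'
    have hdelpb' : delV d p (opp (2 * d + 2) p) = b :=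
      val_inj_down hd1 (by rw [delV_val hd1, hSpb, hbd]; simp only [Fd]; split_ifs <;> omega)
    have hdelqb' : delV d p (opp (2 * d + 2) p + 1) = b := by rw [hdelqb]; exact hdelpb'
    have hne_p_pb : p ≠ opp (2 * d + 2) p := neSv (by rw [hSp, hSpb]; omega)
    have hne_q_qb : p + 1 ≠ opp (2 * d + 2) p + 1 := neSv (by rw [hSq, hSqb]; omega)
    by_cases hE4 : ({p, opp (2 * d + 2) p} : Finset (ZMod (2 * d + 2))) ∈ T
    · have h := fnd _ _ hE4 (by rw [hdelp', hdelpb']; exact habne)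
      rwa [hdelp', hdelpb'] at h
    by_cases hE1 : ({p + 1, opp (2 * d + 2) p + 1} : Finset (ZMod (2 * d + 2))) ∈ T
    · have h := fnd _ _ hE1 (by rw [hdelq', hdelqb']; exact habne)
      rwa [hdelq', hdelqb'] at h
    -- extraction from E4
    obtain ⟨v4, u4, u4', hkv4, hsh4⟩ := engine p (opp (2 * d + 2) p) hne_p_pb
      (by rw [hdelp', hdelpb']; exact habne) hE4
      (by intro f hf; rw [hdelp', hdelpb']; exact hnc f hf)
    have hF4 : (({p + 1, u4} : Finset (ZMod (2 * d + 2))) ∈ T ∧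
          Sbtw (2 * d + 2) (opp (2 * d + 2) p) u4 p) ∨
        (({opp (2 * d + 2) p + 1, u4} : Finset (ZMod (2 * d + 2))) ∈ T ∧
          Sbtw (2 * d + 2) p u4 (opp (2 * d + 2) p)) := by
      rcases hsh4 with ⟨hFm, hEp, hsb, hdvu⟩ | ⟨hEp, hFm, hsb, hdvu⟩
      · exfalso
        rcases pair_eq_pair hne_p_pb hEp with ⟨h1, h2⟩ | ⟨h1, h2⟩
        · have h := congrArg (Sv d p) h1
          rw [hSp, hSvsucc v4 hkv4] at h
          omega
        · have h := congrArg (Sv d p) h2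
          rw [hSpb, hSvsucc v4 hkv4] at h
          rcases hkv4 with hk | hk <;> rw [hk] at h <;> omega
      · rcases pair_eq_pair hne_p_pb hEp with ⟨h1, h2⟩ | ⟨h1, h2⟩
        · left
          rw [← h1] at hFm hsb
          rw [← h2] at hsb
          exact ⟨hFm, hsb⟩
        · right
          rw [← h2] at hFm hsb
          rw [← h1] at hsb
          exact ⟨hFm, hsb⟩
    -- extraction from E1
    obtain ⟨v1, u1, u1', hkv1, hsh1⟩ := engine (p + 1) (opp (2 * d + 2) p + 1) hne_q_qb
      (by rw [hdelq', hdelqb']; exact habne) hE1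
      (by intro f hf; rw [hdelq', hdelqb']; exact hnc f hf)
    rcases hsh1 with ⟨hFm1, hEp1, hsb1, hdvu1⟩ | ⟨hEp1, hFm1, hsb1, hdvu1⟩
    · rcases pair_eq_pair hne_q_qb hEp1 with ⟨h1, h2⟩ | ⟨h1, h2⟩
      · -- B1 : v1 = p, F = {p, u1}, Sbtw q u1 qb
        have hv1 : Sv d p v1 = 0 := by
          have h := congrArg (Sv d p) h1
          rw [hSq, hSvsucc v1 hkv1] at h
          omega
        have hv1p : v1 = p := Sv_inj (hv1.trans hSp.symm)
        rw [hv1p] at hFm1 hsb1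
        rw [← h2] at hsb1
        have hSu1a : Sv d p u1 ≠ 0 := by
          intro hh
          rw [hv1p] at hdvu1
          exact hdvu1 (by rw [Sv_inj (hh.trans hSp.symm)])
        have hSu1b : Sv d p u1 ≠ d + 1 := by
          intro hh
          have he : u1 = opp (2 * d + 2) p := Sv_inj (hh.trans hSpb.symm)
          rw [he] at hFm1
          exact hE4 hFm1
        have hcapD := (sbtw_iff p (p + 1) u1 (opp (2 * d + 2) p + 1)).mp hsb1
        rw [hSq, hSqb] at hcapD
        by_cases hE3 : ({p, opp (2 * d + 2) p + 1} : Finset (ZMod (2 * d + 2))) ∈ T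
        · have h := fnd _ _ hE3 (by rw [hdelp', hdelqb']; exact habne)
          rwa [hdelp', hdelqb'] at h
        · have hne_p_qb : p ≠ opp (2 * d + 2) p + 1 := neSv (by rw [hSp, hSqb]; omega)
          obtain ⟨v3, u3, u3', hkv3, hsh3⟩ := engine p (opp (2 * d + 2) p + 1) hne_p_qb
            (by rw [hdelp', hdelqb']; exact habne) hE3
            (by intro f hf; rw [hdelp', hdelqb']; exact hnc f hf)
          exfalso
          rcases hsh3 with ⟨hFm3, hEp3, hsb3, hdvu3⟩ | ⟨hEp3, hFm3, hsb3, hdvu3⟩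
          · -- F' = {pb, u3}, Sbtw qb u3 p
            rcases pair_eq_pair hne_p_qb hEp3 with ⟨g1, g2⟩ | ⟨g1, g2⟩
            · have h := congrArg (Sv d p) g1
              rw [hSp, hSvsucc v3 hkv3] at h
              omega
            · have hv3 : Sv d p v3 = d + 1 := by
                have h := congrArg (Sv d p) g2
                rw [hSqb, hSvsucc v3 hkv3] at h
                omega
              have hv3pb : v3 = opp (2 * d + 2) p := Sv_inj (hv3.trans hSpb.symm)
              rw [hv3pb] at hFm3 hsb3
              rw [← g1] at hsb3
              have hcapC := (sbtw_iff p (opp (2 * d + 2) p + 1) u3 p).mp hsb3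
              rw [hSqb, hSp] at hcapC
              rcases hF4 with ⟨hFm4, hsb4⟩ | ⟨hFm4, hsb4⟩
              · have hcapW := (sbtw_iff p (opp (2 * d + 2) p) u4 p).mp hsb4
                rw [hSpb, hSp] at hcapW
                have hfin := natC2 hd (Sv_lt p u1) (Sv_lt p u4) hSu1a hSu1b
                  hcapD.1 hcapD.2 hcapW.1 hcapW.2
                exact hTncr _ hFm1 _ hFm4 ⟨p, u1, p + 1, u4, rfl, rfl,
                  by rw [sbtw_iff p, hSp, hSq]; exact hfin.1,
                  by rw [sbtw_iff p, hSp]; exact hfin.2⟩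
              · have hcapW := (sbtw_iff p p u4 (opp (2 * d + 2) p)).mp hsb4
                rw [hSp, hSpb] at hcapW
                have hfin := natC3 hd (Sv_lt p u3) (Sv_lt p u4)
                  hcapC.1 hcapC.2 hcapW.1 hcapW.2
                exact hTncr _ hFm3 _ hFm4
                  ⟨opp (2 * d + 2) p, u3, opp (2 * d + 2) p + 1, u4, rfl, rfl,
                    by rw [sbtw_iff p, hSpb, hSqb]; exact hfin.1,
                    by rw [sbtw_iff p, hSpb]; exact hfin.2⟩
          · -- F' = {q, u3}, Sbtw qb u3 p : C1
            rcases pair_eq_pair hne_p_qb hEp3 with ⟨g1, g2⟩ | ⟨g1, g2⟩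
            · rw [← g1] at hFm3 hsb3 hdvu3
              rw [← g2] at hsb3
              have hSu3a : Sv d p u3 ≠ 0 := by
                intro hh
                exact hdvu3 (by rw [Sv_inj (hh.trans hSp.symm)]; exact hdelq)
              have hSu3b : Sv d p u3 ≠ 1 := by
                intro hh
                exact hdvu3 (by rw [Sv_inj (hh.trans hSq.symm)])
              have hcapC := (sbtw_iff p (opp (2 * d + 2) p + 1) u3 p).mp hsb3
              rw [hSqb, hSp] at hcapC
              have hfin := natC1 hd (Sv_lt p u1) (Sv_lt p u3) hSu1a hSu1b hSu3a hSu3b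
                hcapD.1 hcapD.2 hcapC.1 hcapC.2
              exact hTncr _ hFm1 _ hFm3 ⟨p, u1, p + 1, u3, rfl, rfl,
                by rw [sbtw_iff p, hSp, hSq]; exact hfin.1,
                by rw [sbtw_iff p, hSp]; exact hfin.2⟩
            · have h := congrArg (Sv d p) g2
              rw [hSqb] at h
              rcases hkv3 with hk | hk <;> rw [hk] at h <;> omega
      · -- B2 : v1 = pb, F = {pb, u1}, Sbtw qb u1 q
        have hv1 : Sv d p v1 = d + 1 := by
          have h := congrArg (Sv d p) h2
          rw [hSqb, hSvsucc v1 hkv1] at h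
          omega
        have hv1pb : v1 = opp (2 * d + 2) p := Sv_inj (hv1.trans hSpb.symm)
        rw [hv1pb] at hFm1 hsb1
        rw [← h1] at hsb1
        have hSu1a : Sv d p u1 ≠ d + 1 := by
          intro hh
          rw [hv1pb] at hdvu1
          exact hdvu1 (by rw [Sv_inj (hh.trans hSpb.symm)])
        have hSu1b : Sv d p u1 ≠ 0 := by
          intro hh
          have he : u1 = p := Sv_inj (hh.trans hSp.symm)
          rw [he, Finset.pair_comm] at hFm1
          exact hE4 hFm1
        have hcapD := (sbtw_iff p (opp (2 * d + 2) p + 1) u1 (p + 1)).mp hsb1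
        rw [hSqb, hSq] at hcapD
        by_cases hE2 : ({p + 1, opp (2 * d + 2) p} : Finset (ZMod (2 * d + 2))) ∈ T
        · have h := fnd _ _ hE2 (by rw [hdelq', hdelpb']; exact habne)
          rwa [hdelq', hdelpb'] at h
        · have hne_q_pb : p + 1 ≠ opp (2 * d + 2) p := neSv (by rw [hSq, hSpb]; omega)
          obtain ⟨v2, u2, u2', hkv2, hsh2⟩ := engine (p + 1) (opp (2 * d + 2) p) hne_q_pb
            (by rw [hdelq', hdelpb']; exact habne) hE2
            (by intro f hf; rw [hdelq', hdelpb']; exact hnc f hf)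
          exfalso
          rcases hsh2 with ⟨hFm2, hEp2, hsb2, hdvu2⟩ | ⟨hEp2, hFm2, hsb2, hdvu2⟩
          · rcases pair_eq_pair hne_q_pb hEp2 with ⟨g1, g2⟩ | ⟨g1, g2⟩
            · -- G = {p, u2}, Sbtw q u2 pb
              have hv2 : Sv d p v2 = 0 := by
                have h := congrArg (Sv d p) g1
                rw [hSq, hSvsucc v2 hkv2] at h
                omega
              have hv2p : v2 = p := Sv_inj (hv2.trans hSp.symm)
              rw [hv2p] at hFm2 hsb2
              rw [← g2] at hsb2
              have hcapC := (sbtw_iff p (p + 1) u2 (opp (2 * d + 2) p)).mp hsb2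
              rw [hSq, hSpb] at hcapC
              rcases hF4 with ⟨hFm4, hsb4⟩ | ⟨hFm4, hsb4⟩
              · have hcapW := (sbtw_iff p (opp (2 * d + 2) p) u4 p).mp hsb4
                rw [hSpb, hSp] at hcapW
                have hfin := natC5 hd (Sv_lt p u2) (Sv_lt p u4)
                  hcapC.1 hcapC.2 hcapW.1 hcapW.2
                exact hTncr _ hFm2 _ hFm4 ⟨p, u2, p + 1, u4, rfl, rfl,
                  by rw [sbtw_iff p, hSp, hSq]; exact hfin.1,
                  by rw [sbtw_iff p, hSp]; exact hfin.2⟩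
              · have hcapW := (sbtw_iff p p u4 (opp (2 * d + 2) p)).mp hsb4
                rw [hSp, hSpb] at hcapW
                have hfin := natC6 hd (Sv_lt p u1) (Sv_lt p u4) hSu1b hSu1a
                  hcapD.1 hcapD.2 hcapW.1 hcapW.2
                exact hTncr _ hFm1 _ hFm4
                  ⟨opp (2 * d + 2) p, u1, opp (2 * d + 2) p + 1, u4, rfl, rfl,
                    by rw [sbtw_iff p, hSpb, hSqb]; exact hfin.1,
                    by rw [sbtw_iff p, hSpb]; exact hfin.2⟩
            · have h := congrArg (Sv d p) g2
              rw [hSpb, hSvsucc v2 hkv2] at h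
              rcases hkv2 with hk | hk <;> rw [hk] at h <;> omega
          · rcases pair_eq_pair hne_q_pb hEp2 with ⟨g1, g2⟩ | ⟨g1, g2⟩
            · have h := congrArg (Sv d p) g1
              rw [hSq] at h
              rcases hkv2 with hk | hk <;> rw [hk] at h <;> omega
            · -- G = {qb, u2}, Sbtw q u2 pb : C4
              rw [← g2] at hFm2 hsb2
              rw [← g1] at hsb2
              have hcapC := (sbtw_iff p (p + 1) u2 (opp (2 * d + 2) p)).mp hsb2
              rw [hSq, hSpb] at hcapC
              have hfin := natC4 hd (Sv_lt p u1) (Sv_lt p u2) hSu1b hSu1a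
                hcapD.1 hcapD.2 hcapC.1 hcapC.2
              exact hTncr _ hFm1 _ hFm2
                ⟨opp (2 * d + 2) p, u1, opp (2 * d + 2) p + 1, u2, rfl, rfl,
                  by rw [sbtw_iff p, hSpb, hSqb]; exact hfin.1,
                  by rw [sbtw_iff p, hSpb]; exact hfin.2⟩
    · -- bad4 for E1 impossible
      exfalso
      rcases pair_eq_pair hne_q_qb hEp1 with ⟨h1, h2⟩ | ⟨h1, h2⟩
      · have h := congrArg (Sv d p) h1
        rw [hSq] at h
        rcases hkv1 with hk | hk <;> rw [hk] at h <;> omega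
      · have h := congrArg (Sv d p) h2
        rw [hSqb] at h
        rcases hkv1 with hk | hk <;> rw [hk] at h <;> omega
  -- dispatch
  intro e he hnc
  obtain ⟨a, b, hab, rfl⟩ := he
  have hav := val_lt' hd1 a
  have hbv := val_lt' hd1 b
  have habv : a.val ≠ b.val := fun h => hab (val_inj_down hd1 h)
  by_cases ha0 : a.val = 0
  · by_cases hbd : b.val = d
    · exact mainC a b ha0 hbd hnc
    · exact main0 a b ha0 (by omega) hbd hnc
  · by_cases had : a.val = d
    · by_cases hb0 : b.val = 0
      · have h := mainC b a hb0 had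
          (by intro f hf; rw [Finset.pair_comm b a]; exact hnc f hf)
        rwa [Finset.pair_comm b a] at h
      · by_cases hbd : b.val = d
        · exact absurd (had.trans hbd.symm) habv
        · have hOa : (opp (2 * d) a).val = 0 := by
            rw [opp_down_val hd1, had, if_neg (lt_irrefl d)]
            omega
          have hOb0 : (opp (2 * d) b).val ≠ 0 := by
            rw [opp_down_val hd1]; split_ifs <;> omega
          have hObd : (opp (2 * d) b).val ≠ d := by
            rw [opp_down_val hd1]; split_ifs <;> omega
          have h := main0 (opp (2 * d) a) (opp (2 * d) b) hOa hOb0 hObd (mirror a b hnc)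
          have h2 := comp3 _ _ h
          rwa [opp_opp_down hd1, opp_opp_down hd1] at h2
    · by_cases hb0 : b.val = 0
      · have h := main0 b a hb0 ha0 had
          (by intro f hf; rw [Finset.pair_comm b a]; exact hnc f hf)
        rwa [Finset.pair_comm b a] at h
      · by_cases hbd : b.val = d
        · have hOb : (opp (2 * d) b).val = 0 := by
            rw [opp_down_val hd1, hbd, if_neg (lt_irrefl d)]
            omega
          have hOa0 : (opp (2 * d) a).val ≠ 0 := by
            rw [opp_down_val hd1]; split_ifs <;> omega
          have hOad : (opp (2 * d) a).val ≠ d := by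
            rw [opp_down_val hd1]; split_ifs <;> omega
          have h := main0 (opp (2 * d) b) (opp (2 * d) a) hOb hOa0 hOad
            (mirror b a (by intro f hf; rw [Finset.pair_comm b a]; exact hnc f hf))
          have h2 := comp3 _ _ h
          rw [opp_opp_down hd1, opp_opp_down hd1] at h2
          rwa [Finset.pair_comm b a] at h2
        · exact mainA a b ha0 had hb0 hbd hab hnc

end Cyclo
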